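/- arXiv:1608.00191 — 8 statements merged into one kernel-verified Lean document; each statement's English description precedes it below -/
import Mathlib

section
/- Fix integers n, k, t with 0 < k < n, set r := n − k, assume r ∣ n, set s := n / r and ℓ := r^t, and assume 1 ≤ t ≤ s − 1. Then there exists a finite field B and a B-linear subspace C of the space of maps Fin n → Fin ℓ → B (codewords consisting of n blocks of ℓ symbols each) such that: (i) the B-dimension of C equals k·ℓ; (ii) (MDS property) for every subset S of Fin n with |S| = k, any two elements c, c′ of C satisfying c j = c′ j for all j ∈ S are equal; and (iii) (repair-by-transfer with near-optimal bandwidth) for every i ∈ Fin n there exists D : Fin n → Finset (Fin ℓ) with D i = ∅ and t · (∑_j |D j|) ≤ (t+1)·(n−1)·r^(t−1), such that any two elements c, c′ of C satisfying c j y = c′ j y for all j and all y ∈ D j also satisfy c i = c′ i. -/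
open Polynomial

set_option maxHeartbeats 1000000
set_option synthInstance.maxHeartbeats 400000

namespace NearMDS

variable {F : Type} [Field F]

variable {S R T : ℕ}

/-- Nodes: `s = S+2` groups of `r = R+1` nodes each. -/
abbrev Node (S R : ℕ) := Fin (S + 2) × Fin (R + 1)

/-- Layers (symbol coordinates): functions from `t = T+1` coordinates to `Fin r`. -/
abbrev Layer (T R : ℕ) := Fin (T + 1) → Fin (R + 1)

/-- Balanced assignment of groups to coordinates. -/
def chi (S T : ℕ) : Fin (S + 2) → Fin (T + 1) :=
  fun H => ⟨H.val % (T + 1), Nat.mod_lt _ (Nat.succ_pos T)⟩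

/-- The uncoupled (layered Reed–Solomon type) evaluation. -/
def uP (ν : Node S R → F) (k : ℕ) (P : Layer T R → Fin k → F) (v : Node S R)
    (a : Layer T R) : F :=
  ∑ d : Fin k, P a d * ν v ^ (d : ℕ)

/-- The coupled code map. -/
def psiFun (γ : F) (ν : Node S R → F) (k : ℕ) (P : Layer T R → Fin k → F) :
    Node S R → Layer T R → F :=
  fun v a =>
    uP ν k P v a +
      γ * (if v.2 = a (chi S T v.1) then 0
        else uP ν k P (v.1, a (chi S T v.1)) (Function.update a (chi S T v.1) v.2))

lemma psiFun_add (γ : F) (ν : Node S R → F) (k : ℕ) (P Q : Layer T R → Fin k → F) :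
    psiFun γ ν k (P + Q) = psiFun γ ν k P + psiFun γ ν k Q := by
  funext v a
  show psiFun γ ν k (P + Q) v a = psiFun γ ν k P v a + psiFun γ ν k Q v a
  unfold psiFun uP
  by_cases h : v.2 = a (chi S T v.1)
  · simp only [if_pos h, Pi.add_apply, add_mul, Finset.sum_add_distrib]; ring
  · simp only [if_neg h, Pi.add_apply, add_mul, Finset.sum_add_distrib]; ring

lemma psiFun_smul (γ : F) (ν : Node S R → F) (k : ℕ) (c : F) (P : Layer T R → Fin k → F) :
    psiFun γ ν k (c • P) = c • psiFun γ ν k P := by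
  funext v a
  show psiFun γ ν k (c • P) v a = c * psiFun γ ν k P v a
  unfold psiFun uP
  by_cases h : v.2 = a (chi S T v.1)
  · simp only [if_pos h, Pi.smul_apply, smul_eq_mul, mul_assoc, ← Finset.mul_sum]; ring
  · simp only [if_neg h, Pi.smul_apply, smul_eq_mul, mul_assoc, ← Finset.mul_sum]; ring

/-- `psiFun` as a linear map. -/
def psi (γ : F) (ν : Node S R → F) (k : ℕ) :
    (Layer T R → Fin k → F) →ₗ[F] (Node S R → Layer T R → F) where
  toFun := psiFun γ ν k
  map_add' := psiFun_add γ ν k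
  map_smul' := psiFun_smul γ ν k

lemma psi_apply (γ : F) (ν : Node S R → F) (k : ℕ) (P : Layer T R → Fin k → F)
    (v : Node S R) (a : Layer T R) :
    psi γ ν k P v a =
      uP ν k P v a +
        γ * (if v.2 = a (chi S T v.1) then 0
          else uP ν k P (v.1, a (chi S T v.1)) (Function.update a (chi S T v.1) v.2)) := rfl

/-- Vandermonde-type lemma: a polynomial of degree `< k` vanishing at `k` distinct points
(indexed by a finset) is zero. -/
lemma vand_zero {m : Type} [Fintype m] [DecidableEq m] {ν : m → F}
    (hν : Function.Injective ν) {k : ℕ} {A : Finset m} (hA : k ≤ A.card) {c : Fin k → F}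
    (h : ∀ v ∈ A, ∑ d : Fin k, c d * ν v ^ (d : ℕ) = 0) : c = 0 := by
  obtain ⟨B, hBA, hB⟩ := Finset.exists_subset_card_eq hA
  let e : Fin k ≃ B := (Finset.equivFinOfCardEq hB).symm
  by_contra hc
  have hinj : Function.Injective fun x : Fin k => ν (e x) :=
    hν.comp (Subtype.val_injective.comp e.injective)
  have hdet : (Matrix.vandermonde fun x : Fin k => ν (e x)).det = 0 := by
    rw [← Matrix.exists_mulVec_eq_zero_iff]
    refine ⟨c, hc, ?_⟩
    funext x
    have hx := h (e x) (hBA (e x).2)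
    simpa [Matrix.mulVec, dotProduct, Matrix.vandermonde, mul_comm] using hx
  exact Matrix.det_vandermonde_ne_zero_iff.mpr hinj hdet


/-- Matrix of coefficients (with polynomial entries in the coupling variable) of the
coupled code map. -/
noncomputable def Mfull (ν : Node S R → F) (k : ℕ) (x : Node S R × Layer T R) (y : Layer T R × Fin k) :
    F[X] :=
  (if y.1 = x.2 then C (ν x.1 ^ (y.2 : ℕ)) else 0) +
    (if x.1.2 = x.2 (chi S T x.1.1) then 0
      else if y.1 = Function.update x.2 (chi S T x.1.1) x.1.2 then
        C (ν (x.1.1, x.2 (chi S T x.1.1)) ^ (y.2 : ℕ)) * X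
      else 0)

lemma psi_eq_eval_sum (γ : F) (ν : Node S R → F) (k : ℕ) (P : Layer T R → Fin k → F)
    (v : Node S R) (b : Layer T R) :
    psi γ ν k P v b = ∑ σ : Layer T R × Fin k, (Mfull ν k (v, b) σ).eval γ * P σ.1 σ.2 := by
  classical
  have key : ∀ (a : Layer T R) (d : Fin k), (Mfull ν k (v, b) (a, d)).eval γ * P a d =
      (if a = b then P a d * ν v ^ (d : ℕ) else 0) +
        (if v.2 = b (chi S T v.1) then 0
          else if a = Function.update b (chi S T v.1) v.2 then
            γ * (P a d * ν (v.1, b (chi S T v.1)) ^ (d : ℕ))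
          else 0) := by
    intro a d
    by_cases h2 : v.2 = b (chi S T v.1)
    · by_cases h1 : a = b <;> simp [Mfull, h1, h2] <;> ring
    · have h2' : ¬b (chi S T v.1) = v.2 := fun hh => h2 hh.symm
      by_cases h1 : a = b <;> by_cases h3 : a = Function.update b (chi S T v.1) v.2 <;>
        simp [Mfull, h1, h2, h2', h3] <;> ring
  rw [psi_apply, Fintype.sum_prod_type]
  simp only [key, Finset.sum_add_distrib]
  congr 1
  · rw [Finset.sum_eq_single b]
    · simp [uP]
    · intro a _ hab
      simp [if_neg hab]
    · intro h; exact absurd (Finset.mem_univ b) h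
  · by_cases h2 : v.2 = b (chi S T v.1)
    · simp [h2]
    · simp only [if_neg h2]
      rw [Finset.sum_eq_single (Function.update b (chi S T v.1) v.2)]
      · simp [uP, Finset.mul_sum]
      · intro a _ hab
        simp [if_neg hab]
      · intro h; exact absurd (Finset.mem_univ _) h


lemma cardeq {k : ℕ} {W : Finset (Node S R)} (h : W.card = k) :
    Fintype.card (Layer T R × Fin k) = Fintype.card (↥W × Layer T R) := by
  simp [Fintype.card_coe, h, mul_comm]

/-- The determinant (a polynomial in the coupling coefficient) whose nonvanishing certifies
that the blocks in `W` determine the codeword. -/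
noncomputable def DW (ν : Node S R → F) (k : ℕ) (W : Finset (Node S R)) : F[X] :=
  if h : W.card = k then
    Matrix.det (Matrix.of fun ρ σ : Layer T R × Fin k =>
      Mfull ν k ((((Fintype.equivOfCardEq (cardeq h)) ρ).1 : Node S R),
        ((Fintype.equivOfCardEq (cardeq h)) ρ).2) σ)
  else 1

lemma eval_Mfull_zero (ν : Node S R → F) (k : ℕ) (w : Node S R) (b : Layer T R)
    (σ : Layer T R × Fin k) :
    (Mfull ν k (w, b) σ).eval 0 = if σ.1 = b then ν w ^ (σ.2 : ℕ) else 0 := by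
  rcases σ with ⟨a, d⟩
  by_cases h2 : w.2 = b (chi S T w.1)
  · by_cases h1 : a = b <;> simp [Mfull, h1, h2]
  · have h2' : ¬b (chi S T w.1) = w.2 := fun hh => h2 hh.symm
    by_cases h1 : a = b <;> by_cases h3 : a = Function.update b (chi S T w.1) w.2 <;>
      simp [Mfull, h1, h2, h2', h3]

lemma sum_eval_Mfull_zero (ν : Node S R → F) (k : ℕ) (w : Node S R) (b : Layer T R)
    (q : Layer T R × Fin k → F) :
    (∑ σ : Layer T R × Fin k, (Mfull ν k (w, b) σ).eval 0 * q σ) =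
      ∑ d : Fin k, q (b, d) * ν w ^ (d : ℕ) := by
  simp only [eval_Mfull_zero]
  rw [Fintype.sum_prod_type, Finset.sum_eq_single b]
  · exact Finset.sum_congr rfl fun d _ => by simp [mul_comm]
  · intro a _ hab
    simp [if_neg hab]
  · intro h; exact absurd (Finset.mem_univ b) h

lemma DW_ne_zero (ν : Node S R → F) (hν : Function.Injective ν) (k : ℕ)
    (W : Finset (Node S R)) : DW (T := T) ν k W ≠ 0 := by
  classical
  unfold DW
  split_ifs with h
  · set e := Fintype.equivOfCardEq (cardeq (T := T) h) with he
    set M : Matrix (Layer T R × Fin k) (Layer T R × Fin k) F[X] :=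
      Matrix.of fun ρ σ => Mfull ν k (((e ρ).1 : Node S R), (e ρ).2) σ with hM
    intro hdet
    have h0 : ((evalRingHom (0 : F)).mapMatrix M).det = 0 := by
      rw [← RingHom.map_det, hdet, map_zero]
    obtain ⟨q, hq0, hq⟩ := Matrix.exists_mulVec_eq_zero_iff.mpr h0
    apply hq0
    have hrow : ∀ (w : ↥W) (b : Layer T R),
        ∑ d : Fin k, q (b, d) * ν (w : Node S R) ^ (d : ℕ) = 0 := by
      intro w b
      have := congr_fun hq (e.symm (w, b))
      rw [← sum_eval_Mfull_zero (T := T) ν k (w : Node S R) b q]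
      simpa [Matrix.mulVec, dotProduct, Matrix.map_apply, RingHom.mapMatrix_apply, hM,
        Equiv.apply_symm_apply] using this
    have hbz : ∀ b : Layer T R, (fun d : Fin k => q (b, d)) = 0 := by
      intro b
      refine vand_zero hν (A := W) (le_of_eq h.symm) ?_
      intro v hv
      exact hrow ⟨v, hv⟩ b
    funext σ
    have := congr_fun (hbz σ.1) σ.2
    simpa using this
  · exact one_ne_zero

lemma det_natDegree_le {ι : Type} [Fintype ι] [DecidableEq ι] (M : Matrix ι ι F[X])
    (h : ∀ i j, (M i j).natDegree ≤ 1) : M.det.natDegree ≤ Fintype.card ι := by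
  rw [Matrix.det_apply']
  refine Polynomial.natDegree_sum_le_of_forall_le _ _ ?_
  intro σ _
  refine le_trans (Polynomial.natDegree_mul_le) ?_
  have h1 : ((Equiv.Perm.sign σ : ℤ) : F[X]).natDegree = 0 := Polynomial.natDegree_intCast _
  rw [h1, zero_add]
  refine le_trans (Polynomial.natDegree_prod_le _ _) ?_
  calc (∑ i, (M (σ i) i).natDegree) ≤ ∑ _i : ι, 1 :=
        Finset.sum_le_sum fun i _ => h (σ i) i
    _ = Fintype.card ι := by simp

lemma Mfull_natDegree_le (ν : Node S R → F) (k : ℕ) (x : Node S R × Layer T R)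
    (y : Layer T R × Fin k) : (Mfull ν k x y).natDegree ≤ 1 := by
  unfold Mfull
  refine le_trans (Polynomial.natDegree_add_le _ _) ?_
  simp only [max_le_iff]
  constructor
  · split_ifs <;> simp
  · split_ifs <;> simp [Polynomial.natDegree_C_mul_le]
    · exact le_trans (Polynomial.natDegree_mul_le) (by simp)

lemma DW_natDegree_le (ν : Node S R → F) (k : ℕ) (W : Finset (Node S R)) :
    (DW (T := T) ν k W).natDegree ≤ Fintype.card (Layer T R) * k := by
  unfold DW
  split_ifs with h
  · refine le_trans (det_natDegree_le _ fun i j => Mfull_natDegree_le ν k _ j) ?_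
    simp [Fintype.card_prod]
  · simp

lemma exists_good_gamma (ν : Node S R → F) (hν : Function.Injective ν) (k : ℕ) [Fintype F]
    [DecidableEq F]
    (hcard : 2 ^ Fintype.card (Node S R) * (Fintype.card (Layer T R) * k) + 4 ≤ Fintype.card F) :
    ∃ γ : F, γ ≠ 0 ∧ 1 - γ ^ 2 ≠ 0 ∧
      ∀ W : Finset (Node S R), W.card = k →
        ∀ q : Layer T R × Fin k → F,
          (∀ w ∈ W, ∀ b : Layer T R,
            (∑ σ : Layer T R × Fin k, (Mfull ν k (w, b) σ).eval γ * q σ) = 0) →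
          q = 0 := by
  classical
  set Pk : Finset (Finset (Node S R)) := Finset.univ.powersetCard k with hPk
  set Q : F[X] := X * (X - C 1) * (X + C 1) * ∏ W ∈ Pk, DW (T := T) ν k W with hQ
  have hQne : Q ≠ 0 := by
    refine mul_ne_zero (mul_ne_zero (mul_ne_zero Polynomial.X_ne_zero ?_) ?_) ?_
    · exact Polynomial.X_sub_C_ne_zero 1
    · simpa using Polynomial.X_sub_C_ne_zero (-1 : F)
    · exact Finset.prod_ne_zero_iff.mpr fun W _ => DW_ne_zero ν hν k W
  have hQdeg : Q.natDegree < Fintype.card F := by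
    have h1 : Q.natDegree ≤ 1 + 1 + 1 + 2 ^ Fintype.card (Node S R) *
        (Fintype.card (Layer T R) * k) := by
      rw [hQ]
      refine le_trans (Polynomial.natDegree_mul_le) ?_
      have hp : (∏ W ∈ Pk, DW (T := T) ν k W).natDegree ≤
          2 ^ Fintype.card (Node S R) * (Fintype.card (Layer T R) * k) := by
        refine le_trans (Polynomial.natDegree_prod_le _ _) ?_
        calc (∑ W ∈ Pk, (DW (T := T) ν k W).natDegree)
            ≤ ∑ _W ∈ Pk, Fintype.card (Layer T R) * k :=
              Finset.sum_le_sum fun W _ => DW_natDegree_le ν k W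
          _ = Pk.card * (Fintype.card (Layer T R) * k) := by
              rw [Finset.sum_const, smul_eq_mul]
          _ ≤ 2 ^ Fintype.card (Node S R) * (Fintype.card (Layer T R) * k) := by
              refine Nat.mul_le_mul_right _ ?_
              calc Pk.card ≤ Finset.univ.powerset.card :=
                    Finset.card_le_card (fun W hW => by
                      simp only [Finset.mem_powerset]
                      exact (Finset.mem_powersetCard.mp hW).1)
                _ = 2 ^ Fintype.card (Node S R) := by
                    rw [Finset.card_powerset, Finset.card_univ]
      have hX : (X * (X - C 1) * (X + C (1:F))).natDegree ≤ 1 + 1 + 1 := by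
        refine le_trans (Polynomial.natDegree_mul_le) ?_
        refine add_le_add (le_trans (Polynomial.natDegree_mul_le)
          (add_le_add ?_ ?_)) ?_
        · simp
        · exact le_of_eq (Polynomial.natDegree_X_sub_C 1)
        · exact le_of_eq (Polynomial.natDegree_X_add_C 1)
      omega
    omega
  have hroot : ∃ γ : F, Q.eval γ ≠ 0 := by
    by_contra hall
    push_neg at hall
    have hsub : (Finset.univ : Finset F) ⊆ Q.roots.toFinset := by
      intro γ _
      rw [Multiset.mem_toFinset, Polynomial.mem_roots hQne]
      exact hall γ
    have := Finset.card_le_card hsub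
    rw [Finset.card_univ] at this
    have h2 : Q.roots.toFinset.card ≤ Q.natDegree :=
      le_trans (Multiset.toFinset_card_le _) (Polynomial.card_roots' Q)
    omega
  obtain ⟨γ, hγ⟩ := hroot
  rw [hQ] at hγ
  simp only [Polynomial.eval_mul, Polynomial.eval_X, Polynomial.eval_sub, Polynomial.eval_add,
    Polynomial.eval_C, Polynomial.eval_prod, mul_ne_zero_iff] at hγ
  obtain ⟨⟨⟨hγ0, hγ1⟩, hγ2⟩, hγprod⟩ := hγ
  refine ⟨γ, hγ0, ?_, ?_⟩
  · intro h
    have h' : (γ - 1) * (γ + 1) = 0 := by linear_combination -h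
    rcases mul_eq_zero.mp h' with h'' | h''
    · exact hγ1 h''
    · exact hγ2 h''
  · intro W hW q hq
    have hWmem : W ∈ Pk := by
      rw [hPk, Finset.mem_powersetCard]
      exact ⟨Finset.subset_univ _, hW⟩
    have hDW : (DW (T := T) ν k W).eval γ ≠ 0 := by
      rw [Finset.prod_ne_zero_iff] at hγprod
      exact hγprod W hWmem
    unfold DW at hDW
    rw [dif_pos hW] at hDW
    set e := Fintype.equivOfCardEq (cardeq (T := T) hW) with he
    set M : Matrix (Layer T R × Fin k) (Layer T R × Fin k) F[X] :=
      Matrix.of fun ρ σ => Mfull ν k (((e ρ).1 : Node S R), (e ρ).2) σ with hM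
    have hdet : ((evalRingHom γ).mapMatrix M).det ≠ 0 := by
      rw [← RingHom.map_det]
      exact hDW
    by_contra hq0
    apply hdet
    rw [← Matrix.exists_mulVec_eq_zero_iff]
    refine ⟨q, hq0, ?_⟩
    funext ρ
    have h1 := hq ((e ρ).1 : Node S R) (e ρ).1.2 (e ρ).2
    simpa [Matrix.mulVec, dotProduct, Matrix.map_apply, RingHom.mapMatrix_apply, hM]
      using h1


lemma psi_apply_eq (γ : F) (ν : Node S R → F) (k : ℕ) (P : Layer T R → Fin k → F)
    (v : Node S R) (a : Layer T R) (h : v.2 = a (chi S T v.1)) :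
    psi γ ν k P v a = uP ν k P v a := by
  rw [psi_apply, if_pos h, mul_zero, add_zero]

lemma psi_apply_ne (γ : F) (ν : Node S R → F) (k : ℕ) (P : Layer T R → Fin k → F)
    (v : Node S R) (a : Layer T R) (h : ¬v.2 = a (chi S T v.1)) :
    psi γ ν k P v a = uP ν k P v a +
      γ * uP ν k P (v.1, a (chi S T v.1)) (Function.update a (chi S T v.1) v.2) := by
  rw [psi_apply, if_neg h]

lemma repair_core (γ : F) (hγ0 : γ ≠ 0) (hγ2 : 1 - γ ^ 2 ≠ 0) (ν : Node S R → F)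
    (hν : Function.Injective ν) (k : ℕ) (hk : k ≤ (S + 1) * (R + 1))
    (f : Node S R) (P : Layer T R → Fin k → F)
    (H0 : ∀ v : Node S R, ∀ a : Layer T R, v ≠ f →
      (a (chi S T f.1) = f.2 ∨ (chi S T v.1 = chi S T f.1 ∧ v.2 = f.2)) →
      psi γ ν k P v a = 0) :
    ∀ b : Layer T R, psi γ ν k P f b = 0 := by
  classical
  have solve2 : ∀ x y : F, x + γ * y = 0 → y + γ * x = 0 → x = 0 := by
    intro x y h1 h2
    have h3 : (1 - γ ^ 2) * x = 0 := by linear_combination h1 - γ * h2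
    rcases mul_eq_zero.mp h3 with h | h
    · exact absurd h hγ2
    · exact h
  set g : Fin (T + 1) := chi S T f.1 with hg
  -- Step 1 : nodes from a different coordinate class vanish on the repair plane
  have S1 : ∀ v : Node S R, ∀ a : Layer T R, chi S T v.1 ≠ g → a g = f.2 →
      uP ν k P v a = 0 := by
    intro v a hcl ha
    have hvf : v ≠ f := fun he => hcl (by rw [he])
    by_cases hd : v.2 = a (chi S T v.1)
    · have h1 := H0 v a hvf (Or.inl ha)
      rwa [psi_apply_eq _ _ _ _ _ _ hd] at h1
    · have h1 := H0 v a hvf (Or.inl ha)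
      rw [psi_apply_ne _ _ _ _ _ _ hd] at h1
      set v' : Node S R := (v.1, a (chi S T v.1)) with hv'
      set a' : Layer T R := Function.update a (chi S T v.1) v.2 with ha'
      have hv'f : v' ≠ f := fun he => by
        have hfst : v.1 = f.1 := by rw [← he, hv']
        exact hcl (by rw [hg, hfst])
      have ha'g : a' g = f.2 := by
        rw [ha', Function.update_of_ne (Ne.symm hcl)]
        exact ha
      have h2 := H0 v' a' hv'f (Or.inl ha'g)
      have hcond : ¬v'.2 = a' (chi S T v'.1) := by
        simp only [hv', ha']
        rw [Function.update_self]
        exact fun hh => hd hh.symm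
      rw [psi_apply_ne _ _ _ _ _ _ hcond] at h2
      have hback : ((v'.1 : Fin (S + 2)), a' (chi S T v'.1)) = v := by
        simp only [hv', ha']
        rw [Function.update_self]
      have hback2 : Function.update a' (chi S T v'.1) v'.2 = a := by
        simp only [hv', ha']
        rw [Function.update_idem, Function.update_eq_self]
      rw [hback, hback2] at h2
      exact solve2 _ _ h1 h2
  -- Step 2 : nodes in the same coordinate class but another group vanish on the plane
  have S2 : ∀ v : Node S R, ∀ a : Layer T R, v.1 ≠ f.1 → chi S T v.1 = g → a g = f.2 →
      uP ν k P v a = 0 := by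
    intro v a hgr hcl ha
    have hvf : v ≠ f := fun he => hgr (by rw [he])
    by_cases hd : v.2 = a (chi S T v.1)
    · have h1 := H0 v a hvf (Or.inl ha)
      rwa [psi_apply_eq _ _ _ _ _ _ hd] at h1
    · have h1 := H0 v a hvf (Or.inl ha)
      rw [psi_apply_ne _ _ _ _ _ _ hd] at h1
      have hag : a (chi S T v.1) = f.2 := by rw [hcl]; exact ha
      set v' : Node S R := (v.1, f.2) with hv'
      set a' : Layer T R := Function.update a (chi S T v.1) v.2 with ha'
      rw [hag] at h1
      have hv'f : v' ≠ f := fun he => hgr (by rw [← he, hv'])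
      have h2 := H0 v' a' hv'f (Or.inr ⟨hcl, rfl⟩)
      have hcond : ¬v'.2 = a' (chi S T v'.1) := by
        simp only [hv', ha']
        show ¬f.2 = Function.update a (chi S T v.1) v.2 (chi S T v.1)
        rw [Function.update_self]
        intro hh
        apply hd
        rw [← hh, hag]
      rw [psi_apply_ne _ _ _ _ _ _ hcond] at h2
      have hback : ((v'.1 : Fin (S + 2)), a' (chi S T v'.1)) = v := by
        simp only [hv', ha']
        show ((v.1 : Fin (S + 2)), Function.update a (chi S T v.1) v.2 (chi S T v.1)) = v
        rw [Function.update_self]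
      have hback2 : Function.update a' (chi S T v'.1) v'.2 = a := by
        simp only [hv', ha']
        show Function.update (Function.update a (chi S T v.1) v.2) (chi S T v.1) f.2 = a
        rw [Function.update_idem, ← hag, Function.update_eq_self]
      rw [hback, hback2] at h2
      exact solve2 _ _ h1 h2
  -- Step 3 : the whole plane vanishes
  have S3 : ∀ a : Layer T R, a g = f.2 → ∀ v : Node S R, uP ν k P v a = 0 := by
    intro a ha
    have hP : (fun d : Fin k => P a d) = 0 := by
      set A : Finset (Node S R) :=
        (Finset.univ.erase f.1) ×ˢ (Finset.univ : Finset (Fin (R + 1))) with hA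
      have hcard : A.card = (S + 1) * (R + 1) := by
        rw [hA, Finset.card_product, Finset.card_erase_of_mem (Finset.mem_univ _)]
        simp
      refine vand_zero hν (A := A) (by rw [hcard]; exact hk) ?_
      intro v hv
      rw [hA, Finset.mem_product, Finset.mem_erase] at hv
      have hv1 : v.1 ≠ f.1 := hv.1.1
      show uP ν k P v a = 0
      by_cases hclass : chi S T v.1 = g
      · exact S2 v a hv1 hclass ha
      · exact S1 v a hclass ha
    intro v
    unfold uP
    refine Finset.sum_eq_zero fun d _ => ?_
    rw [show P a d = 0 from congr_fun hP d, zero_mul]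
  -- Step 4 : the failed node's uncoupled values vanish everywhere
  have S4 : ∀ b : Layer T R, uP ν k P f b = 0 := by
    intro b
    by_cases hb : b g = f.2
    · exact S3 b hb f
    · set v : Node S R := (f.1, b g) with hv
      set a : Layer T R := Function.update b g f.2 with ha
      have hvf : v ≠ f := fun he => hb (by rw [← he, hv])
      have hag : a g = f.2 := by rw [ha, Function.update_self]
      have h1 := H0 v a hvf (Or.inl hag)
      have hcond : ¬v.2 = a (chi S T v.1) := by
        show ¬b g = a (chi S T f.1)
        rw [← hg, hag]
        exact hb
      rw [psi_apply_ne _ _ _ _ _ _ hcond] at h1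
      have hch : chi S T v.1 = g := rfl
      have hback : ((v.1 : Fin (S + 2)), a (chi S T v.1)) = f := by
        show ((f.1 : Fin (S + 2)), a (chi S T f.1)) = f
        rw [← hg, hag]
      have hback2 : Function.update a (chi S T v.1) v.2 = b := by
        show Function.update a (chi S T f.1) (b g) = b
        rw [← hg, ha, Function.update_idem, Function.update_eq_self]
      rw [hback, hback2] at h1
      have hu : uP ν k P v a = 0 := S3 a hag v
      rw [hu, zero_add] at h1
      exact (mul_eq_zero.mp h1).resolve_left hγ0
  intro b
  by_cases hd : f.2 = b (chi S T f.1)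
  · rw [psi_apply_eq _ _ _ _ _ _ hd]
    exact S4 b
  · rw [psi_apply_ne _ _ _ _ _ _ hd]
    rw [S4 b]
    have : uP ν k P (f.1, b (chi S T f.1)) (Function.update b (chi S T f.1) f.2) = 0 := by
      refine S3 _ ?_ _
      rw [← hg, Function.update_self]
    rw [this, mul_zero, add_zero]


lemma card_plane {T R : ℕ} (g : Fin (T + 1)) (j : Fin (R + 1)) :
    (Finset.univ.filter (fun a : Layer T R => a g = j)).card = (R + 1) ^ T := by
  classical
  have e : {a : Layer T R // a g = j} ≃ ({h : Fin (T + 1) // h ≠ g} → Fin (R + 1)) :=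
    { toFun := fun a h => a.1 h.1
      invFun := fun b => ⟨fun h => if hh : h = g then j else b ⟨h, hh⟩, by simp⟩
      left_inv := fun a => by
        apply Subtype.ext
        funext h
        by_cases hh : h = g
        · subst hh; simp [a.2]
        · simp [hh]
      right_inv := fun b => by
        funext h
        simp [h.2] }
  have h1 : (Finset.univ.filter (fun a : Layer T R => a g = j)).card
      = Fintype.card {a : Layer T R // a g = j} := (Fintype.card_subtype _).symm
  rw [h1, Fintype.card_congr e, Fintype.card_fun]
  have h2 : Fintype.card {h : Fin (T + 1) // h ≠ g} = T := by
    rw [Fintype.card_subtype_compl]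
    simp
  rw [h2, Fintype.card_fin]

lemma class_card_le (S T : ℕ) (g : Fin (T + 1)) :
    (Finset.univ.filter (fun H : Fin (S + 2) => chi S T H = g)).card
      ≤ (S + 1) / (T + 1) + 1 := by
  classical
  have h := Finset.card_le_card_of_injOn
    (s := Finset.univ.filter (fun H : Fin (S + 2) => chi S T H = g))
    (t := Finset.range ((S + 1) / (T + 1) + 1))
    (fun H : Fin (S + 2) => (H : ℕ) / (T + 1)) ?_ ?_
  · simpa using h
  · intro H _
    rw [Finset.mem_coe, Finset.mem_range]
    have hH : (H : ℕ) ≤ S + 1 := Nat.lt_succ_iff.mp H.2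
    exact Nat.lt_succ_of_le (Nat.div_le_div_right hH)
  · intro H1 h1 H2 h2 hdiv
    simp only [Finset.coe_filter, Set.mem_setOf_eq, Finset.mem_univ, true_and] at h1 h2
    have hm1 : (H1 : ℕ) % (T + 1) = g.val := congrArg Fin.val h1
    have hm2 : (H2 : ℕ) % (T + 1) = g.val := congrArg Fin.val h2
    simp only at hdiv
    apply Fin.ext
    rw [← Nat.div_add_mod (H1 : ℕ) (T + 1), ← Nat.div_add_mod (H2 : ℕ) (T + 1),
      hm1, hm2, hdiv]

end NearMDS

open NearMDS in
/-- Existence of MDS vector codes with sub-packetization level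
`ℓ = (n-k)^t` whose every block admits repair-by-transfer with bandwidth at
most `(1 + 1/t)` times the cut-set bound `(n-1)·r^(t-1)`. -/
theorem exists_mds_code_near_optimal_repair
    (n k t : ℕ) (hk : 0 < k) (hkn : k < n)
    (r s ℓ : ℕ) (hr : r = n - k) (hdvd : r ∣ n) (hs : s = n / r)
    (hℓ : ℓ = r ^ t) (ht1 : 1 ≤ t) (hts : t ≤ s - 1) :
    ∃ (B : Type) (_ : Field B) (_ : Fintype B)
      (C : Submodule B (Fin n → Fin ℓ → B)),
      Module.finrank B C = k * ℓ ∧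
      (∀ S : Finset (Fin n), S.card = k →
        ∀ c ∈ C, ∀ c' ∈ C, (∀ j ∈ S, c j = c' j) → c = c') ∧
      (∀ i : Fin n, ∃ D : Fin n → Finset (Fin ℓ),
        D i = ∅ ∧
        t * (∑ j, (D j).card) ≤ (t + 1) * (n - 1) * r ^ (t - 1) ∧
        ∀ c ∈ C, ∀ c' ∈ C,
          (∀ j : Fin n, ∀ y ∈ D j, c j y = c' j y) → c i = c' i) := by
  classical
  -- basic numerics
  have hr1 : 1 ≤ r := by omega
  have hrs : r * s = n := by rw [hs]; exact Nat.mul_div_cancel' hdvd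
  have hs2 : 2 ≤ s := by
    rcases Nat.lt_or_ge s 2 with h | h
    · interval_cases s <;> omega
    · exact h
  obtain ⟨R, hR⟩ : ∃ R, r = R + 1 := ⟨r - 1, by omega⟩
  obtain ⟨T, hT⟩ : ∃ T, t = T + 1 := ⟨t - 1, by omega⟩
  obtain ⟨S, hS⟩ : ∃ S, s = S + 2 := ⟨s - 2, by omega⟩
  have hnval : n = (S + 2) * (R + 1) := by rw [← hrs, hR, hS]; ring
  have hkval : k = (S + 1) * (R + 1) := by
    have h1 : k = n - r := by omega
    have h2 : (S + 2) * (R + 1) = (S + 1) * (R + 1) + (R + 1) := by ring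
    omega
  have hLval : ℓ = (R + 1) ^ (T + 1) := by rw [hℓ, hR, hT]
  have cardN : Fintype.card (Node S R) = n := by
    simp [hnval]
  have cardL : Fintype.card (Layer T R) = ℓ := by
    rw [Fintype.card_fun]
    simp [hLval]
  have hkn' : k ≤ Fintype.card (Node S R) := by rw [cardN]; omega
  -- choose a large prime field
  obtain ⟨p, hpN, hpprime⟩ := Nat.exists_infinite_primes (2 ^ n * (ℓ * k) + n + 4)
  haveI : Fact p.Prime := ⟨hpprime⟩
  haveI : NeZero p := ⟨hpprime.pos.ne'⟩
  set F : Type := ZMod p with hF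
  have hcardF : Fintype.card F = p := ZMod.card p
  -- the injective labelling of nodes
  set eN : Fin n ≃ Node S R := Fintype.equivOfCardEq (by rw [Fintype.card_fin, cardN]) with heN
  set ν : Node S R → F := fun v => (((eN.symm v : Fin n) : ℕ) : ZMod p) with hν'
  have hltp : ∀ x : Fin n, (x : ℕ) < p := fun x => lt_of_lt_of_le x.2 (by omega)
  have hν : Function.Injective ν := by
    intro v w h
    apply eN.symm.injective
    apply Fin.ext
    have h2 := congrArg ZMod.val h
    rwa [ZMod.val_natCast_of_lt (hltp _), ZMod.val_natCast_of_lt (hltp _)] at h2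
  -- the good coupling coefficient
  obtain ⟨γ, hγ0, hγ2, hker⟩ := exists_good_gamma (F := F) ν hν k
    (by rw [hcardF, cardN, cardL]; omega)
  -- transport
  set eL : Fin ℓ ≃ Layer T R := Fintype.equivOfCardEq (by rw [Fintype.card_fin, cardL]) with heL
  set Tr : (Fin n → Fin ℓ → F) ≃ₗ[F] (Node S R → Layer T R → F) :=
    { toFun := fun c v a => c (eN.symm v) (eL.symm a)
      map_add' := fun _ _ => rfl
      map_smul' := fun _ _ => rfl
      invFun := fun z i y => z (eN i) (eL y)
      left_inv := fun c => by funext i y; simp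
      right_inv := fun z => by funext v a; simp } with hTr
  have hTrApp : ∀ (c : Fin n → Fin ℓ → F) (v : Node S R) (a : Layer T R),
      Tr c v a = c (eN.symm v) (eL.symm a) := fun _ _ _ => rfl
  set C : Submodule F (Fin n → Fin ℓ → F) :=
    (LinearMap.range (psi γ ν k)).map
      (Tr.symm : (Node S R → Layer T R → F) →ₗ[F] (Fin n → Fin ℓ → F)) with hC
  have hmemC : ∀ c : Fin n → Fin ℓ → F, c ∈ C ↔ ∃ P, psi γ ν k P = Tr c := by
    intro c
    rw [hC, Submodule.mem_map]
    constructor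
    · rintro ⟨z, ⟨P, hP⟩, hzc⟩
      refine ⟨P, ?_⟩
      rw [hP, ← hzc]
      exact (Tr.apply_symm_apply z).symm
    · rintro ⟨P, hP⟩
      exact ⟨Tr c, ⟨P, hP⟩, Tr.symm_apply_apply c⟩
  -- the MDS property in the node world
  have hcore : ∀ (W : Finset (Node S R)), W.card = k →
      ∀ P : Layer T R → Fin k → F, (∀ w ∈ W, ∀ b, psi γ ν k P w b = 0) → P = 0 := by
    intro W hW P hP
    have hq := hker W hW (fun σ => P σ.1 σ.2) ?_
    · funext a d
      exact congrFun hq (a, d)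
    · intro w hw b
      rw [← psi_eq_eval_sum]
      exact hP w hw b
  refine ⟨F, inferInstance, inferInstance, C, ?_, ?_, ?_⟩
  · -- dimension
    have hinj : Function.Injective (psi (S := S) (R := R) (T := T) γ ν k) := by
      intro P Q hPQ
      obtain ⟨W0, -, hW0⟩ := Finset.exists_subset_card_eq
        (s := (Finset.univ : Finset (Node S R))) (n := k)
        (by rw [Finset.card_univ]; exact hkn')
      have hz : P - Q = 0 := by
        refine hcore W0 hW0 (P - Q) ?_
        intro w _ b
        rw [map_sub]
        simp [hPQ]
      exact sub_eq_zero.mp hz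
    have h1 : Module.finrank F C
        = Module.finrank F (LinearMap.range (psi (S := S) (R := R) (T := T) γ ν k)) := by
      rw [hC]
      exact LinearEquiv.finrank_map_eq Tr.symm _
    rw [h1, LinearMap.finrank_range_of_inj hinj]
    rw [Module.finrank_pi_fintype]
    simp only [Module.finrank_pi, Fintype.card_fin, Finset.sum_const, smul_eq_mul,
      Finset.card_univ]
    rw [cardL]
    ring
  · -- MDS
    intro Sset hSc c hc c' hc' hagree
    obtain ⟨P, hP⟩ := (hmemC c).mp hc
    obtain ⟨P', hP'⟩ := (hmemC c').mp hc'
    set W : Finset (Node S R) := Sset.map eN.toEmbedding with hW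
    have hWc : W.card = k := by rw [hW, Finset.card_map, hSc]
    have hPd : P - P' = 0 := by
      refine hcore W hWc (P - P') ?_
      intro w hw b
      rw [hW, Finset.mem_map] at hw
      obtain ⟨j0, hj0, rfl⟩ := hw
      rw [map_sub, hP, hP']
      have : Tr c (eN.toEmbedding j0) b - Tr c' (eN.toEmbedding j0) b = 0 := by
        rw [hTrApp, hTrApp]
        simp only [Equiv.coe_toEmbedding, Equiv.symm_apply_apply]
        rw [hagree j0 hj0]
        ring
      simpa using this
    have hTreq : Tr c = Tr c' := by
      have : psi γ ν k P = psi γ ν k P' := by rw [sub_eq_zero.mp hPd]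
      rw [hP, hP'] at this
      exact this
    exact Tr.injective hTreq
  · -- repair
    intro i
    set f : Node S R := eN i with hf
    set g : Fin (T + 1) := chi S T f.1 with hg
    set plane : Finset (Layer T R) :=
      Finset.univ.filter (fun a : Layer T R => a g = f.2) with hplane
    set Dnode : Node S R → Finset (Layer T R) := fun v =>
      if v = f then ∅
      else if chi S T v.1 = g ∧ v.2 = f.2 then Finset.univ
      else plane with hDnode
    refine ⟨fun i' => (Dnode (eN i')).map eL.symm.toEmbedding, ?_, ?_, ?_⟩
    · show Finset.map eL.symm.toEmbedding (Dnode (eN i)) = ∅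
      rw [← hf]
      simp [hDnode]
    · -- bandwidth
      set x : ℕ := (R + 1) ^ T with hx
      set Mir : Finset (Node S R) :=
        (Finset.univ.erase f).filter (fun v => chi S T v.1 = g ∧ v.2 = f.2) with hMir
      have hplanecard : plane.card = x := by rw [hplane, hx]; exact card_plane g f.2
      have hDnode_le : ∀ v ∈ Finset.univ.erase f,
          (Dnode v).card ≤ x + (if chi S T v.1 = g ∧ v.2 = f.2
            then (R + 1) ^ (T + 1) - x else 0) := by
        intro v hv
        have hvf : v ≠ f := (Finset.mem_erase.mp hv).1
        by_cases hmir : chi S T v.1 = g ∧ v.2 = f.2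
        · simp only [hDnode, if_neg hvf, if_pos hmir]
          have hcu : (Finset.univ : Finset (Layer T R)).card = (R + 1) ^ (T + 1) := by
            rw [Finset.card_univ, Fintype.card_fun]
            simp
          have hxle : x ≤ (R + 1) ^ (T + 1) := by
            rw [hx]
            exact Nat.pow_le_pow_right (Nat.succ_pos R) (by omega)
          omega
        · simp only [hDnode, if_neg hvf, if_neg hmir]
          simp [hplanecard]
      have hsum1 : (∑ i' : Fin n, ((Dnode (eN i')).map eL.symm.toEmbedding).card)
          = ∑ v : Node S R, (Dnode v).card := by
        simp only [Finset.card_map]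
        exact Equiv.sum_comp eN fun v => (Dnode v).card
      have hbound : (∑ v : Node S R, (Dnode v).card)
          ≤ (n - 1) * x + Mir.card * ((R + 1) ^ (T + 1) - x) := by
        rw [← Finset.add_sum_erase _ _ (Finset.mem_univ f)]
        have hDf : (Dnode f).card = 0 := by simp [hDnode]
        rw [hDf, zero_add]
        calc ∑ v ∈ Finset.univ.erase f, (Dnode v).card
            ≤ ∑ v ∈ Finset.univ.erase f, (x + if chi S T v.1 = g ∧ v.2 = f.2
                then (R + 1) ^ (T + 1) - x else 0) := Finset.sum_le_sum hDnode_le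
          _ = (n - 1) * x + Mir.card * ((R + 1) ^ (T + 1) - x) := by
              rw [Finset.sum_add_distrib, Finset.sum_const, smul_eq_mul]
              congr 1
              · congr 1
                rw [Finset.card_erase_of_mem (Finset.mem_univ f), Finset.card_univ, cardN]
              · rw [← Finset.sum_filter, ← hMir, Finset.sum_const, smul_eq_mul]
      have hMirclass : (T + 1) * Mir.card ≤ S + 1 := by
        have hsub : Mir.card ≤
            ((Finset.univ.filter (fun H : Fin (S + 2) => chi S T H = g)).erase f.1).card := by
          refine Finset.card_le_card_of_injOn Prod.fst ?_ ?_
          · intro v hv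
            simp only [hMir, Finset.mem_coe, Finset.mem_filter, Finset.mem_erase] at hv
            obtain ⟨⟨hvf, -⟩, hcl, hv2⟩ := hv
            rw [Finset.mem_coe, Finset.mem_erase, Finset.mem_filter]
            refine ⟨?_, Finset.mem_univ _, hcl⟩
            intro h1
            apply hvf
            rw [← Prod.mk.eta (p := v), h1, hv2, Prod.mk.eta]
          · intro v hv w hw hvw
            simp only [Finset.coe_filter, Set.mem_setOf_eq, hMir, Finset.mem_erase,
              Finset.mem_filter, Finset.mem_univ, true_and] at hv hw
            apply Prod.ext hvw
            rw [hv.2.2, hw.2.2]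
        have hGmem : f.1 ∈ Finset.univ.filter (fun H : Fin (S + 2) => chi S T H = g) := by
          rw [Finset.mem_filter]
          exact ⟨Finset.mem_univ _, rfl⟩
        have h2 := class_card_le S T g
        have hone := Finset.card_erase_add_one hGmem
        have h3 : Mir.card ≤ (S + 1) / (T + 1) := by
          have h5 : Mir.card + 1 ≤ (S + 1) / (T + 1) + 1 := by
            calc Mir.card + 1
                ≤ ((Finset.univ.filter
                    (fun H : Fin (S + 2) => chi S T H = g)).erase f.1).card + 1 :=
                  Nat.add_le_add_right hsub 1
              _ = (Finset.univ.filter (fun H : Fin (S + 2) => chi S T H = g)).card := hone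
              _ ≤ (S + 1) / (T + 1) + 1 := h2
          exact Nat.le_of_succ_le_succ h5
        calc (T + 1) * Mir.card ≤ (T + 1) * ((S + 1) / (T + 1)) :=
              Nat.mul_le_mul_left _ h3
          _ ≤ S + 1 := Nat.mul_div_le _ _
      have hx2 : (R + 1) ^ (T + 1) - x = x * R := by
        have h1 : (R + 1) ^ (T + 1) = (R + 1) ^ T * (R + 1) := pow_succ _ _
        have h2 : (R + 1) ^ T * (R + 1) = (R + 1) ^ T * R + (R + 1) ^ T := by ring
        rw [hx]
        omega
      have h3 : (S + 1) * R ≤ n - 1 := by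
        have h4 : (S + 2) * (R + 1) = (S + 1) * R + (S + R + 2) := by ring
        set A := (S + 1) * R with hA
        set B := (S + 2) * (R + 1) with hB
        omega
      have hrt : r ^ (t - 1) = x := by
        rw [hR, hT, hx]
        simp
      rw [hsum1, hrt]
      calc t * (∑ v : Node S R, (Dnode v).card)
          ≤ t * ((n - 1) * x + Mir.card * ((R + 1) ^ (T + 1) - x)) :=
            Nat.mul_le_mul_left _ hbound
        _ = t * ((n - 1) * x) + (t * Mir.card) * ((R + 1) ^ (T + 1) - x) := by ring
        _ ≤ t * ((n - 1) * x) + (S + 1) * (x * R) := by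
            rw [hx2]
            refine Nat.add_le_add_left ?_ _
            refine Nat.mul_le_mul_right _ ?_
            rw [hT]
            exact hMirclass
        _ = t * ((n - 1) * x) + ((S + 1) * R) * x := by ring
        _ ≤ t * ((n - 1) * x) + (n - 1) * x := Nat.add_le_add_left
            (Nat.mul_le_mul_right _ h3) _
        _ = (t + 1) * (n - 1) * x := by ring
    · -- determination
      intro c hc c' hc' hagree
      obtain ⟨P, hP⟩ := (hmemC c).mp hc
      obtain ⟨P', hP'⟩ := (hmemC c').mp hc'
      set Pd := P - P' with hPdd
      have hpsiPd : psi γ ν k Pd = Tr (c - c') := by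
        rw [hPdd, map_sub, hP, hP', ← map_sub]
      have H0 : ∀ v : Node S R, ∀ a : Layer T R, v ≠ f →
          (a (chi S T f.1) = f.2 ∨ (chi S T v.1 = chi S T f.1 ∧ v.2 = f.2)) →
          psi γ ν k Pd v a = 0 := by
        intro v a hvf hcase
        have hmem : a ∈ Dnode v := by
          simp only [hDnode, if_neg hvf]
          by_cases hmir : chi S T v.1 = g ∧ v.2 = f.2
          · rw [if_pos hmir]; exact Finset.mem_univ _
          · rw [if_neg hmir, hplane, Finset.mem_filter]
            refine ⟨Finset.mem_univ _, ?_⟩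
            rcases hcase with h | h
            · exact h
            · exact absurd h hmir
        have hy : eL.symm a ∈ (Dnode (eN (eN.symm v))).map eL.symm.toEmbedding := by
          rw [Equiv.apply_symm_apply]
          exact Finset.mem_map_of_mem _ hmem
        have h1 := hagree (eN.symm v) (eL.symm a) hy
        rw [hpsiPd, hTrApp]
        simp only [Pi.sub_apply]
        rw [h1]
        ring
      have hzero := repair_core γ hγ0 hγ2 ν hν k (le_of_eq hkval) f Pd H0
      funext y
      have h1 := hzero (eL y)
      rw [hpsiPd, hTrApp] at h1
      simp only [hf, Equiv.symm_apply_apply, Equiv.symm_apply_apply, Pi.sub_apply] at h1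
      exact sub_eq_zero.mp h1
end

section
/- Fix integers n, k with 0 < k < n, set r := n − k, assume r ∣ n, and set ℓ := r. Then there exists a finite field B and a B-linear subspace C of the space of maps Fin n → Fin ℓ → B such that: (i) the B-dimension of C equals k·ℓ; (ii) (MDS property) for every subset S of Fin n with |S| = k, any two elements c, c′ of C satisfying c j = c′ j for all j ∈ S are equal; and (iii) for every i ∈ Fin n there exists D : Fin n → Finset (Fin ℓ) with D i = ∅ and ∑_j |D j| ≤ 2·(n−1), such that any two elements c, c′ of C satisfying c j y = c′ j y for all j and all y ∈ D j also satisfy c i = c′ i. -/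
open Polynomial Matrix Finset
open Function (Injective)
set_option linter.unusedSectionVars false

namespace MDSTwiceAux

variable {B : Type} [Field B] [DecidableEq B] {n r m : ℕ}

/-- groupmate of node `j` in position `y`. -/
noncomputable def gmate (e : Fin n ≃ Fin m × Fin r) (j : Fin n) (y : Fin r) : Fin n :=
  e.symm ((e j).1, y)

/-- The polynomial parity-check matrix (variable `X` is the coupling parameter). -/
noncomputable def HP (e : Fin n ≃ Fin m × Fin r) (lam : Fin n → B) :
    Matrix (Fin r × Fin r) (Fin n × Fin r) B[X] :=
  Matrix.of fun q u =>
    Polynomial.C (lam u.1 ^ (q.1 : ℕ)) * (if q.2 = u.2 then 1 else 0) +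
      (if (e u.1).2 = q.2 ∧ u.2 ≠ q.2 then
        X * Polynomial.C (lam (gmate e u.1 u.2) ^ (q.1 : ℕ)) else 0)

/-- The parity-check matrix with coupling parameter `ε`. -/
noncomputable def Hm (e : Fin n ≃ Fin m × Fin r) (lam : Fin n → B) (ε : B) :
    Matrix (Fin r × Fin r) (Fin n × Fin r) B :=
  (HP e lam).map (Polynomial.eval ε)

lemma Hm_apply (e : Fin n ≃ Fin m × Fin r) (lam : Fin n → B) (ε : B) (q : Fin r × Fin r)
    (u : Fin n × Fin r) :
    Hm e lam ε q u = lam u.1 ^ (q.1 : ℕ) * (if q.2 = u.2 then 1 else 0) +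
      (if (e u.1).2 = q.2 ∧ u.2 ≠ q.2 then ε * lam (gmate e u.1 u.2) ^ (q.1 : ℕ) else 0) := by
  simp only [Hm, HP, Matrix.map_apply, Matrix.of_apply, eval_add, apply_ite (Polynomial.eval ε)]
  split_ifs <;> simp

/-- The parity-check linear map. -/
noncomputable def Phi (e : Fin n ≃ Fin m × Fin r) (lam : Fin n → B) (ε : B) :
    (Fin n → Fin r → B) →ₗ[B] (Fin r × Fin r → B) where
  toFun c := fun q => ∑ u : Fin n × Fin r, Hm e lam ε q u * c u.1 u.2
  map_add' c c' := by
    funext q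
    simp [mul_add, Finset.sum_add_distrib]
  map_smul' a c := by
    funext q
    simp only [Pi.smul_apply, smul_eq_mul, RingHom.id_apply, Finset.mul_sum]
    exact Finset.sum_congr rfl fun u _ => by ring

/-- Square polynomial submatrix given by an `r`-tuple of nodes. -/
noncomputable def Nsub (e : Fin n ≃ Fin m × Fin r) (lam : Fin n → B) (t : Fin r → Fin n) :
    Matrix (Fin r × Fin r) (Fin r × Fin r) B[X] :=
  (HP e lam).submatrix id (fun q => (t q.1, q.2))

lemma eval_zero_det_Nsub (e : Fin n ≃ Fin m × Fin r) {lam : Fin n → B}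
    (hlam : Injective lam) {t : Fin r → Fin n} (ht : Injective t) :
    ((Nsub e lam t).det).eval 0 ≠ 0 := by
  have h1 : ((Nsub e lam t).det).eval 0 = ((Nsub e lam t).map (Polynomial.eval 0)).det := by
    have := (Polynomial.evalRingHom (0 : B)).map_det (Nsub e lam t)
    simpa [RingHom.mapMatrix_apply] using this
  have h2 : (Nsub e lam t).map (Polynomial.eval 0) =
      Matrix.kroneckerMap (· * ·) ((vandermonde (fun a => lam (t a)))ᵀ)
        (1 : Matrix (Fin r) (Fin r) B) := by
    ext ⟨s, x⟩ ⟨a, y⟩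
    simp only [Nsub, HP, Matrix.map_apply, Matrix.submatrix_apply, Matrix.of_apply, id_eq,
      eval_add, apply_ite (Polynomial.eval (0 : B)), Matrix.kroneckerMap_apply, Matrix.one_apply,
      vandermonde_apply, Matrix.transpose_apply]
    split_ifs <;> simp
  rw [h1, h2, Matrix.det_kronecker]
  simp only [Matrix.det_one, one_pow, mul_one, Matrix.det_transpose, det_vandermonde]
  apply pow_ne_zero
  rw [Finset.prod_ne_zero_iff]
  intro i _
  rw [Finset.prod_ne_zero_iff]
  intro j hj
  rw [sub_ne_zero]
  intro hEq
  exact absurd (ht (hlam hEq)).symm (Finset.mem_Ioi.mp hj).ne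

lemma det_Nsub_ne_zero (e : Fin n ≃ Fin m × Fin r) {lam : Fin n → B}
    (hlam : Injective lam) {t : Fin r → Fin n} (ht : Injective t) :
    (Nsub e lam t).det ≠ 0 := by
  intro h
  exact eval_zero_det_Nsub e hlam ht (by rw [h, eval_zero])


/-- Core: a codeword supported on the range of `t` is zero. -/
lemma vanish (e : Fin n ≃ Fin m × Fin r) (lam : Fin n → B) (ε : B)
    {t : Fin r → Fin n} (ht : Injective t)
    (hdet : ((Nsub e lam t).det).eval ε ≠ 0)
    {c : Fin n → Fin r → B} (hc : c ∈ LinearMap.ker (Phi e lam ε))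
    (h0 : ∀ j : Fin n, (∀ a, t a ≠ j) → c j = 0) : c = 0 := by
  have hdet' : ((Nsub e lam t).map (Polynomial.eval ε)).det ≠ 0 := by
    have := (Polynomial.evalRingHom ε).map_det (Nsub e lam t)
    rw [RingHom.mapMatrix_apply, coe_evalRingHom] at this
    rw [← this]
    exact hdet
  set M : Matrix (Fin r × Fin r) (Fin r × Fin r) B := (Nsub e lam t).map (Polynomial.eval ε)
    with hM
  set w : Fin r × Fin r → B := fun u => c (t u.1) u.2 with hw
  have hmul : M.mulVec w = 0 := by
    funext q
    have hPhi : ∑ u : Fin n × Fin r, Hm e lam ε q u * c u.1 u.2 = 0 := by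
      have := LinearMap.mem_ker.mp hc
      exact congrFun this q
    have hsplit : ∑ u : Fin n × Fin r, Hm e lam ε q u * c u.1 u.2 =
        ∑ j : Fin n, ∑ y : Fin r, Hm e lam ε q (j, y) * c j y := Fintype.sum_prod_type _
    have himg : ∑ j ∈ Finset.image t Finset.univ, ∑ y : Fin r, Hm e lam ε q (j, y) * c j y =
        ∑ j : Fin n, ∑ y : Fin r, Hm e lam ε q (j, y) * c j y := by
      apply Finset.sum_subset (Finset.subset_univ _)
      intro j _ hj
      have : ∀ a, t a ≠ j := by
        intro a ha
        exact hj (Finset.mem_image.mpr ⟨a, Finset.mem_univ a, ha⟩)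
      have hcz := h0 j this
      simp [hcz]
    have hre : ∑ j ∈ Finset.image t Finset.univ, ∑ y : Fin r, Hm e lam ε q (j, y) * c j y =
        ∑ a : Fin r, ∑ y : Fin r, Hm e lam ε q (t a, y) * c (t a) y :=
      Finset.sum_image fun a _ b _ hab => ht hab
    have : ∑ a : Fin r, ∑ y : Fin r, Hm e lam ε q (t a, y) * c (t a) y = 0 := by
      rw [← hre, himg, ← hsplit]
      exact hPhi
    calc M.mulVec w q = ∑ u : Fin r × Fin r, M q u * w u := rfl
      _ = ∑ a : Fin r, ∑ y : Fin r, Hm e lam ε q (t a, y) * c (t a) y := by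
          rw [Fintype.sum_prod_type]
          rfl
      _ = 0 := this
  have hw0 : w = 0 := Matrix.eq_zero_of_mulVec_eq_zero hdet' hmul
  funext j y
  by_cases hj : ∃ a, t a = j
  · obtain ⟨a, rfl⟩ := hj
    have : w (a, y) = 0 := by rw [hw0]; rfl
    simpa [hw] using this
  · push_neg at hj
    simp [h0 j hj]


/-- Repair: if a codeword vanishes on the downloaded symbols, its block `i` is zero. -/
lemma repair (e : Fin n ≃ Fin m × Fin r) {lam : Fin n → B} (hlam : Injective lam)
    {ε : B} (hε : ε ≠ 0) {c : Fin n → Fin r → B} (hc : c ∈ LinearMap.ker (Phi e lam ε))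
    (i : Fin n)
    (h1 : ∀ j : Fin n, j ≠ i → (e j).2 = (e i).2 → c j = 0)
    (h2 : ∀ j : Fin n, (e j).2 ≠ (e i).2 → c j (e i).2 = 0) : c i = 0 := by
  set v0 : Fin r := (e i).2 with hv0
  set muf : Fin r → B := fun w => lam (gmate e i w) with hmuf
  have hgm_v0 : gmate e i v0 = i := by
    simp [gmate, hv0]
  have hmuf_inj : Injective muf := by
    intro a b hab
    have := hlam hab
    have := e.symm.injective this
    simpa [Prod.ext_iff] using this
  set dv : Fin r → B := fun w => if w = v0 then c i v0 else ε * c i w with hdv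
  have key : ∀ s : Fin r, ∑ w : Fin r, muf w ^ (s : ℕ) * dv w = 0 := by
    intro s
    have hPhi : ∑ u : Fin n × Fin r, Hm e lam ε (s, v0) u * c u.1 u.2 = 0 :=
      congrFun (LinearMap.mem_ker.mp hc) (s, v0)
    rw [Fintype.sum_prod_type] at hPhi
    -- split each entry into the diagonal part and the coupling part
    have hPhi' : (∑ j : Fin n, ∑ y : Fin r, lam j ^ (s : ℕ) * (if v0 = y then 1 else 0) * c j y)
        + (∑ j : Fin n, ∑ y : Fin r,
            (if (e j).2 = v0 ∧ y ≠ v0 then ε * lam (gmate e j y) ^ (s : ℕ) else 0) * c j y)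
        = 0 := by
      have heq : (∑ j : Fin n, ∑ y : Fin r, lam j ^ (s : ℕ) * (if v0 = y then 1 else 0) * c j y)
          + (∑ j : Fin n, ∑ y : Fin r,
              (if (e j).2 = v0 ∧ y ≠ v0 then ε * lam (gmate e j y) ^ (s : ℕ) else 0) * c j y)
          = ∑ j : Fin n, ∑ y : Fin r, Hm e lam ε (s, v0) (j, y) * c j y := by
        rw [← Finset.sum_add_distrib]
        apply Finset.sum_congr rfl
        intro j _
        rw [← Finset.sum_add_distrib]
        apply Finset.sum_congr rfl
        intro y _
        rw [Hm_apply]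
        ring
      exact heq.trans hPhi
    have e1 : (∑ j : Fin n, ∑ y : Fin r, lam j ^ (s : ℕ) * (if v0 = y then 1 else 0) * c j y)
        = lam i ^ (s : ℕ) * c i v0 := by
      have : ∀ j : Fin n, (∑ y : Fin r, lam j ^ (s : ℕ) * (if v0 = y then 1 else 0) * c j y)
          = lam j ^ (s : ℕ) * c j v0 := by
        intro j
        simp [mul_ite, ite_mul]
      rw [Finset.sum_congr rfl fun j _ => this j]
      rw [Finset.sum_eq_single i]
      · intro j _ hj
        by_cases hvj : (e j).2 = v0
        · simp [h1 j hj hvj]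
        · simp [h2 j hvj]
      · intro h; exact absurd (Finset.mem_univ i) h
    have e2 : (∑ j : Fin n, ∑ y : Fin r,
          (if (e j).2 = v0 ∧ y ≠ v0 then ε * lam (gmate e j y) ^ (s : ℕ) else 0) * c j y)
        = ∑ y ∈ Finset.univ.erase v0, ε * muf y ^ (s : ℕ) * c i y := by
      rw [Finset.sum_eq_single i]
      · have : ∀ y : Fin r,
            (if (e i).2 = v0 ∧ y ≠ v0 then ε * lam (gmate e i y) ^ (s : ℕ) else 0) * c i y
            = if y ≠ v0 then ε * muf y ^ (s : ℕ) * c i y else 0 := by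
          intro y
          by_cases hy : y = v0 <;> simp [hy, hv0, hmuf]
        rw [Finset.sum_congr rfl fun y _ => this y]
        rw [Finset.sum_ite, Finset.sum_const_zero, add_zero, Finset.filter_ne']
      · intro j _ hj
        by_cases hvj : (e j).2 = v0
        · simp [h1 j hj hvj]
        · simp [hvj]
      · intro h; exact absurd (Finset.mem_univ i) h
    have hsum : ∑ w : Fin r, muf w ^ (s : ℕ) * dv w
        = muf v0 ^ (s : ℕ) * dv v0 + ∑ w ∈ Finset.univ.erase v0, muf w ^ (s : ℕ) * dv w :=
      (Finset.add_sum_erase _ _ (Finset.mem_univ v0)).symm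
    rw [hsum]
    have : muf v0 ^ (s : ℕ) * dv v0 = lam i ^ (s : ℕ) * c i v0 := by
      simp [hmuf, hdv, hgm_v0]
    rw [this]
    have : ∑ w ∈ Finset.univ.erase v0, muf w ^ (s : ℕ) * dv w
        = ∑ w ∈ Finset.univ.erase v0, ε * muf w ^ (s : ℕ) * c i w := by
      apply Finset.sum_congr rfl
      intro w hw
      have hwne : w ≠ v0 := (Finset.mem_erase.mp hw).1
      simp [hdv, hwne]
      ring
    rw [this, ← e1, ← e2]
    exact hPhi'
  -- Vandermonde
  have hmulvec : (vandermonde muf)ᵀ.mulVec dv = 0 := by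
    funext s
    have : (vandermonde muf)ᵀ.mulVec dv s = ∑ w : Fin r, muf w ^ (s : ℕ) * dv w := by
      simp [Matrix.mulVec, dotProduct, vandermonde_apply, Matrix.transpose_apply]
    rw [this, key s]
    rfl
  have hdetv : ((vandermonde muf)ᵀ).det ≠ 0 := by
    rw [Matrix.det_transpose, det_vandermonde]
    rw [Finset.prod_ne_zero_iff]
    intro a _
    rw [Finset.prod_ne_zero_iff]
    intro b hb
    rw [sub_ne_zero]
    intro hEq
    exact absurd (hmuf_inj hEq).symm (Finset.mem_Ioi.mp hb).ne
  have hdv0 : dv = 0 := Matrix.eq_zero_of_mulVec_eq_zero hdetv hmulvec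
  funext w
  by_cases hw : w = v0
  · have : dv v0 = 0 := by rw [hdv0]; rfl
    simp [hdv] at this
    rw [hw]; exact this
  · have : dv w = 0 := by rw [hdv0]; rfl
    simp [hdv, hw] at this
    rcases this with h | h
    · exact absurd h hε
    · exact h


lemma natDegree_det_le {ι : Type} [Fintype ι] [DecidableEq ι] (M : Matrix ι ι B[X])
    (h : ∀ i j, (M i j).natDegree ≤ 1) : M.det.natDegree ≤ Fintype.card ι := by
  rw [Matrix.det_apply']
  apply Polynomial.natDegree_sum_le_of_forall_le
  intro σ _
  apply le_trans (Polynomial.natDegree_mul_le)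
  rw [Polynomial.natDegree_intCast, zero_add]
  apply le_trans (Polynomial.natDegree_prod_le _ _)
  calc ∑ i : ι, (M (σ i) i).natDegree ≤ ∑ _i : ι, 1 :=
        Finset.sum_le_sum fun i _ => h (σ i) i
    _ = Fintype.card ι := by simp

lemma natDegree_HP_le (e : Fin n ≃ Fin m × Fin r) (lam : Fin n → B)
    (q : Fin r × Fin r) (u : Fin n × Fin r) : (HP e lam q u).natDegree ≤ 1 := by
  simp only [HP, Matrix.of_apply]
  apply le_trans (Polynomial.natDegree_add_le _ _)
  simp only [max_le_iff]
  constructor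
  · apply le_trans (Polynomial.natDegree_mul_le)
    simp only [Polynomial.natDegree_C, zero_add]
    split_ifs <;> simp
  · split_ifs
    · apply le_trans (Polynomial.natDegree_mul_le)
      simp [Polynomial.natDegree_X_le]
    · simp

lemma exists_good_eps [Fintype B] (e : Fin n ≃ Fin m × Fin r) {lam : Fin n → B}
    (hlam : Injective lam)
    (hcard : 1 + Fintype.card (Fin r → Fin n) * (r * r) < Fintype.card B) :
    ∃ ε : B, ε ≠ 0 ∧ ∀ t : Fin r → Fin n, Injective t →
      ((Nsub e lam t).det).eval ε ≠ 0 := by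
  classical
  set s : Finset (Fin r → Fin n) := Finset.univ.filter (fun t => Injective t) with hs
  set P : B[X] := X * ∏ t ∈ s, (Nsub e lam t).det with hP
  have hP0 : P ≠ 0 := by
    apply mul_ne_zero Polynomial.X_ne_zero
    rw [Finset.prod_ne_zero_iff]
    intro t ht
    exact det_Nsub_ne_zero e hlam (Finset.mem_filter.mp ht).2
  have hdeg : P.natDegree < Fintype.card B := by
    have h1 : P.natDegree ≤ 1 + ∑ t ∈ s, ((Nsub e lam t).det).natDegree := by
      apply le_trans (Polynomial.natDegree_mul_le)
      gcongr
      · exact Polynomial.natDegree_X_le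
      · exact Polynomial.natDegree_prod_le _ _
    have h2 : ∀ t ∈ s, ((Nsub e lam t).det).natDegree ≤ r * r := by
      intro t _
      have := natDegree_det_le (B := B) (Nsub e lam t) (fun i j => by
        exact natDegree_HP_le e lam i (t j.1, j.2))
      simpa [Fintype.card_prod] using this
    have h3 : ∑ t ∈ s, ((Nsub e lam t).det).natDegree ≤ s.card * (r * r) := by
      calc ∑ t ∈ s, ((Nsub e lam t).det).natDegree ≤ ∑ _t ∈ s, (r * r) :=
            Finset.sum_le_sum h2
        _ = s.card * (r * r) := by rw [Finset.sum_const, smul_eq_mul]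
    have h4 : s.card ≤ Fintype.card (Fin r → Fin n) := by
      apply le_trans (Finset.card_filter_le _ _)
      simp
    have h5 : P.natDegree ≤ 1 + Fintype.card (Fin r → Fin n) * (r * r) := by
      apply le_trans h1
      have := le_trans h3 (Nat.mul_le_mul_right (r * r) h4)
      omega
    exact lt_of_le_of_lt h5 hcard
  obtain ⟨ε, hev⟩ := P.exists_eval_ne_zero_of_natDegree_lt_card hP0 (by
    rw [Cardinal.mk_fintype]
    exact_mod_cast hdeg)
  refine ⟨ε, ?_, ?_⟩
  · intro h0
    apply hev
    rw [hP, Polynomial.eval_mul, Polynomial.eval_X, h0, zero_mul]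
  · intro t ht
    intro h0
    apply hev
    rw [hP, Polynomial.eval_mul, Polynomial.eval_prod]
    rw [Finset.prod_eq_zero (Finset.mem_filter.mpr ⟨Finset.mem_univ t, ht⟩) h0, mul_zero]

end MDSTwiceAux


open MDSTwiceAux in
/-- Existence of MDS vector codes with sub-packetization level
`ℓ = n - k` whose every block admits repair-by-transfer with bandwidth at most
`2(n-1)`, i.e. twice the cut-set bound. -/
theorem exists_mds_code_twice_cut_set
    (n k : ℕ) (hk : 0 < k) (hkn : k < n)
    (r ℓ : ℕ) (hr : r = n - k) (hdvd : r ∣ n) (hℓ : ℓ = r) :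
    ∃ (B : Type) (_ : Field B) (_ : Fintype B)
      (C : Submodule B (Fin n → Fin ℓ → B)),
      Module.finrank B C = k * ℓ ∧
      (∀ S : Finset (Fin n), S.card = k →
        ∀ c ∈ C, ∀ c' ∈ C, (∀ j ∈ S, c j = c' j) → c = c') ∧
      (∀ i : Fin n, ∃ D : Fin n → Finset (Fin ℓ),
        D i = ∅ ∧
        (∑ j, (D j).card) ≤ 2 * (n - 1) ∧
        ∀ c ∈ C, ∀ c' ∈ C,
          (∀ j : Fin n, ∀ y ∈ D j, c j y = c' j y) → c i = c' i) := by
  obtain rfl := hℓ.symm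
  have hr0 : 0 < r := by omega
  have hnkr : n = k + r := by omega
  set m : ℕ := n / r with hmdef
  have hm : m * r = n := Nat.div_mul_cancel hdvd
  have hm1 : 0 < m := by
    rcases Nat.eq_zero_or_pos m with h | h
    · rw [h, zero_mul] at hm
      omega
    · exact h
  have hrn : r ≤ n := by omega
  have hmn : m ≤ n := by nlinarith [hm]
  obtain ⟨p, hple, hp⟩ := Nat.exists_infinite_primes (max (n + 1) (2 + n ^ r * (r * r)))
  haveI : Fact p.Prime := ⟨hp⟩
  haveI : NeZero p := ⟨hp.ne_zero⟩
  have hnp : n < p := lt_of_lt_of_le (by omega : n < max (n + 1) (2 + n ^ r * (r * r))) hple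
  set lam : Fin n → ZMod p := fun j => ((j : ℕ) : ZMod p) with hlamdef
  have hlam : Function.Injective lam := by
    intro a b hab
    have := congrArg ZMod.val hab
    rw [ZMod.val_natCast_of_lt (lt_trans a.isLt hnp),
      ZMod.val_natCast_of_lt (lt_trans b.isLt hnp)] at this
    exact Fin.ext this
  set e : Fin n ≃ Fin m × Fin r := (finCongr hm.symm).trans finProdFinEquiv.symm with hedef
  have hcard : 1 + Fintype.card (Fin r → Fin n) * (r * r) < Fintype.card (ZMod p) := by
    rw [ZMod.card, Fintype.card_fun, Fintype.card_fin, Fintype.card_fin]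
    have : 2 + n ^ r * (r * r) ≤ p := le_trans (le_max_right _ _) hple
    omega
  obtain ⟨ε, hε0, hdets⟩ := exists_good_eps e hlam hcard
  set CC : Submodule (ZMod p) (Fin n → Fin r → ZMod p) := LinearMap.ker (Phi e lam ε) with hCC
  -- MDS property
  have mds : ∀ S : Finset (Fin n), S.card = k →
      ∀ c ∈ CC, ∀ c' ∈ CC, (∀ j ∈ S, c j = c' j) → c = c' := by
    intro S hS c hc c' hc' hagree
    set T : Finset (Fin n) := Sᶜ with hTdef
    have hT : T.card = r := by
      rw [hTdef, Finset.card_compl, hS, Fintype.card_fin]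
      omega
    have hTcard : Fintype.card ↥T = r := by rw [Fintype.card_coe]; exact hT
    set eqv : ↥T ≃ Fin r := Fintype.equivFinOfCardEq hTcard with heqv
    set t : Fin r → Fin n := fun a => ((eqv.symm a : ↥T) : Fin n) with ht_def
    have ht : Function.Injective t := by
      intro a b hab
      exact eqv.symm.injective (Subtype.ext hab)
    have h0 : ∀ j : Fin n, (∀ a, t a ≠ j) → (c - c') j = 0 := by
      intro j hj
      have hjS : j ∈ S := by
        by_contra hjS
        have hjT : j ∈ T := Finset.mem_compl.mpr hjS
        apply hj (eqv ⟨j, hjT⟩)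
        rw [ht_def]
        simp
      funext y
      simp [hagree j hjS]
    have hz := vanish e lam ε ht (hdets t ht) (sub_mem hc hc') h0
    exact sub_eq_zero.mp hz
  refine ⟨ZMod p, inferInstance, inferInstance, CC, ?_, mds, ?_⟩
  · -- dimension
    have hdom : Module.finrank (ZMod p) (Fin n → Fin r → ZMod p) = n * r := by
      rw [Module.finrank_pi_fintype]
      simp [Module.finrank_pi]
    have hrank := LinearMap.finrank_range_add_finrank_ker (Phi e lam ε)
    rw [hdom] at hrank
    have hrle : Module.finrank (ZMod p) (LinearMap.range (Phi e lam ε)) ≤ r * r := by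
      refine le_trans (Submodule.finrank_le _) ?_
      rw [Module.finrank_pi]
      simp
    obtain ⟨S0, _, hS0⟩ := Finset.exists_subset_card_eq (s := (Finset.univ : Finset (Fin n))) (n := k)
      (by rw [Finset.card_univ, Fintype.card_fin]; omega)
    set π : CC →ₗ[ZMod p] (↥S0 → Fin r → ZMod p) :=
      (LinearMap.funLeft (ZMod p) (Fin r → ZMod p) (fun j : ↥S0 => (j : Fin n))).comp
        CC.subtype with hπ
    have hπinj : Function.Injective π := by
      intro x y hxy
      apply Subtype.ext
      apply mds S0 hS0 x.1 x.2 y.1 y.2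
      intro j hj
      exact congrFun hxy ⟨j, hj⟩
    have hle := LinearMap.finrank_le_finrank_of_injective hπinj
    have hcodom : Module.finrank (ZMod p) (↥S0 → Fin r → ZMod p) = k * r := by
      rw [Module.finrank_pi_fintype]
      simp [Module.finrank_pi, Fintype.card_coe, hS0]
    rw [hcodom] at hle
    have hnr : n * r = k * r + r * r := by rw [hnkr]; ring
    rw [← hCC] at hrank
    omega
  · -- repair
    intro i
    set v0 : Fin r := (e i).2 with hv0
    set D : Fin n → Finset (Fin r) := fun j =>
      if j = i then (∅ : Finset (Fin r)) else
        if (e j).2 = v0 then Finset.univ else {v0} with hD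
    refine ⟨D, by simp [hD], ?_, ?_⟩
    · -- bandwidth
      have h1 : ∀ pg : Fin m × Fin r, (D (e.symm pg)).card =
          (if pg = e i then 0 else if pg.2 = v0 then r else 1) := by
        intro pg
        by_cases hp1 : pg = e i
        · rw [hp1, Equiv.symm_apply_apply]
          simp [hD]
        · have hne : e.symm pg ≠ i := by
            intro h
            apply hp1
            rw [← h, Equiv.apply_symm_apply]
          by_cases hp2 : pg.2 = v0
          · simp [hD, hne, Equiv.apply_symm_apply, hp1, hp2]
          · simp [hD, hne, Equiv.apply_symm_apply, hp2, hp1]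
      have h2 : ∑ j, (D j).card =
          ∑ pg : Fin m × Fin r, (if pg = e i then 0 else if pg.2 = v0 then r else 1) :=
        (Fintype.sum_equiv e.symm _ _ (fun pg => (h1 pg).symm)).symm
      rw [h2, Fintype.sum_prod_type]
      have h3 : ∀ g : Fin m, (∑ w : Fin r, (if (g, w) = e i then 0 else if w = v0 then r else 1))
          = (if g = (e i).1 then 0 else r) + (r - 1) := by
        intro g
        rw [← Finset.add_sum_erase Finset.univ _ (Finset.mem_univ v0)]
        have hfv0 : (if (g, v0) = e i then 0 else if v0 = v0 then r else 1)
            = (if g = (e i).1 then 0 else r) := by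
          by_cases hg : g = (e i).1
          · have : (g, v0) = e i := by
              rw [hg, hv0]
            rw [if_pos this, if_pos hg]
          · have : (g, v0) ≠ e i := by
              intro h
              exact hg (congrArg Prod.fst h)
            simp [this, hg]
        rw [hfv0]
        congr 1
        have : ∀ w ∈ Finset.univ.erase v0,
            (if (g, w) = e i then 0 else if w = v0 then r else 1) = 1 := by
          intro w hw
          have hwne : w ≠ v0 := (Finset.mem_erase.mp hw).1
          have : (g, w) ≠ e i := by
            intro h
            exact hwne (by rw [hv0, ← h])
          simp [this, hwne]
        rw [Finset.sum_congr rfl this, Finset.sum_const, smul_eq_mul, mul_one,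
          Finset.card_erase_of_mem (Finset.mem_univ v0), Finset.card_univ, Fintype.card_fin]
      rw [Finset.sum_congr rfl (fun g _ => h3 g), Finset.sum_add_distrib, Finset.sum_const,
        Finset.card_univ, Fintype.card_fin, smul_eq_mul]
      have h4 : (∑ g : Fin m, (if g = (e i).1 then 0 else r)) = (m - 1) * r := by
        rw [← Finset.add_sum_erase Finset.univ _ (Finset.mem_univ (e i).1)]
        simp only [if_pos rfl, zero_add]
        have : ∀ g ∈ Finset.univ.erase (e i).1, (if g = (e i).1 then 0 else r) = r := by
          intro g hg
          simp [(Finset.mem_erase.mp hg).1]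
        rw [Finset.sum_congr rfl this, Finset.sum_const, smul_eq_mul,
          Finset.card_erase_of_mem (Finset.mem_univ (e i).1), Finset.card_univ, Fintype.card_fin]
        simp
      rw [h4]
      have e1 : (m - 1) * r = n - r := by rw [Nat.sub_mul, one_mul, hm]
      have e2 : m * (r - 1) = n - m := by
        rw [mul_comm, Nat.sub_mul, one_mul, mul_comm, hm]
      rw [e1, e2]
      omega
    · -- correctness
      intro c hc c' hc' hdl
      have h1 : ∀ j : Fin n, j ≠ i → (e j).2 = v0 → (c - c') j = 0 := by
        intro j hj hvj
        funext y
        have := hdl j y (by simp [hD, hj, hvj])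
        simp [this]
      have h2 : ∀ j : Fin n, (e j).2 ≠ v0 → (c - c') j v0 = 0 := by
        intro j hvj
        have hji : j ≠ i := by
          intro h
          exact hvj (by rw [h])
        have := hdl j v0 (by simp [hD, hji, hvj])
        simp [this]
      have := MDSTwiceAux.repair e hlam hε0 (sub_mem hc hc') i h1 h2
      exact sub_eq_zero.mp this
end

section
/- Let L be a field, let r, ℓ, n be positive integers with r ≤ n, and let H, E : Matrix (Fin r × Fin ℓ) (Fin n × Fin ℓ) L be matrices such that (a) for every injective map ι : Fin r → Fin n the block column submatrix H[ι] is invertible, and (b) E ((p,x),(i,y)) = 0 whenever p = 0 (so E has at most (r−1)·ℓ nonzero rows). Let B be a field equipped with an L-algebra structure, and let ρ ∈ B be integral over L with natDegree (minpoly L ρ) > (r−1)·ℓ. Then for every injective map ι : Fin r → Fin n, the block column submatrix ((H.map (algebraMap L B)) + ρ • (E.map (algebraMap L B)))[ι] is invertible. In particular H.map(algebraMap) + ρ • E.map(algebraMap) is an MDS parity-check matrix over B. -/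
set_option maxHeartbeats 1000000


/-- The block column submatrix `M[ι]` of an `r×n` array of `ℓ×ℓ` blocks,
selecting the block columns indexed by `ι`. -/
def Matrix.blockColSub {F : Type*} {r ℓ n : ℕ}
    (M : Matrix (Fin r × Fin ℓ) (Fin n × Fin ℓ) F) (ι : Fin r → Fin n) :
    Matrix (Fin r × Fin ℓ) (Fin r × Fin ℓ) F :=
  M.submatrix id (fun jy => (ι jy.1, jy.2))

/-- Perturbing an MDS parity-check matrix `H` (whose perturbation
matrix `E` vanishes on the block row `p = 0`, hence has at most `(r-1)ℓ`
nonzero rows) by `ρ • E`, where `ρ` is integral over `L` with minimal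
polynomial of degree `> (r-1)ℓ`, yields an MDS parity-check matrix. -/
theorem perturbed_parityCheck_isMDS
    (L : Type*) [Field L] (r ℓ n : ℕ) (hr : 0 < r) (hℓ : 0 < ℓ) (hn : 0 < n)
    (hrn : r ≤ n)
    (H E : Matrix (Fin r × Fin ℓ) (Fin n × Fin ℓ) L)
    (hH : ∀ ι : Fin r → Fin n, Function.Injective ι → IsUnit (H.blockColSub ι))
    (hE : ∀ (p : Fin r) (x : Fin ℓ) (i : Fin n) (y : Fin ℓ),
      (p : ℕ) = 0 → E (p, x) (i, y) = 0)
    (B : Type*) [Field B] [Algebra L B] (ρ : B) (hρ : IsIntegral L ρ)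
    (hdeg : (minpoly L ρ).natDegree > (r - 1) * ℓ) :
    ∀ ι : Fin r → Fin n, Function.Injective ι →
      IsUnit ((H.map (algebraMap L B) + ρ • E.map (algebraMap L B)).blockColSub ι) := by
  intro ι hι
  classical
  set M := H.blockColSub ι with hM
  set N := E.blockColSub ι with hN
  have hNzero : ∀ (x y : Fin r × Fin ℓ), (x.1 : ℕ) = 0 → N x y = 0 := by
    rintro ⟨p, a⟩ ⟨j, b⟩ hp
    exact hE p a (ι j) b hp
  set A : Matrix (Fin r × Fin ℓ) (Fin r × Fin ℓ) (Polynomial L) :=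
    M.map Polynomial.C + (Polynomial.X : Polynomial L) • N.map Polynomial.C with hA
  set q : Polynomial L := A.det with hq
  -- evaluation at ρ gives the determinant over B
  have hmapA : A.map (Polynomial.aeval ρ) =
      M.map (algebraMap L B) + ρ • N.map (algebraMap L B) := by
    ext x y
    simp only [hA, Matrix.map_apply, Matrix.add_apply, Matrix.smul_apply,
      smul_eq_mul, map_add, map_mul, Polynomial.aeval_X, Polynomial.aeval_C,
      Polynomial.aeval_C]
  have hsub : (H.map (algebraMap L B) + ρ • E.map (algebraMap L B)).blockColSub ι
      = M.map (algebraMap L B) + ρ • N.map (algebraMap L B) := by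
    ext x y
    simp [Matrix.blockColSub, hM, hN, Matrix.map_apply, Matrix.add_apply,
      Matrix.smul_apply, Matrix.submatrix_apply]
  have heval : Polynomial.aeval ρ q =
      ((H.map (algebraMap L B) + ρ • E.map (algebraMap L B)).blockColSub ι).det := by
    rw [hsub, ← hmapA, hq]
    exact RingHom.map_det (Polynomial.aeval ρ).toRingHom A
  -- degree bound on entries
  have hdegA : ∀ x y : Fin r × Fin ℓ,
      (A x y).natDegree ≤ if (x.1 : ℕ) = 0 then 0 else 1 := by
    intro x y
    by_cases hx : (x.1 : ℕ) = 0
    · simp [hA, Matrix.add_apply, Matrix.smul_apply, Matrix.map_apply,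
        hNzero x y hx, hx]
    · simp only [hA, Matrix.add_apply, Matrix.smul_apply, Matrix.map_apply, hx,
        if_false, smul_eq_mul]
      refine (Polynomial.natDegree_add_le _ _).trans ?_
      simp only [Polynomial.natDegree_C, max_le_iff]
      constructor
      · omega
      · exact (Polynomial.natDegree_mul_le).trans (by simp)
  have hsum : ∑ x : Fin r × Fin ℓ, (if (x.1 : ℕ) = 0 then 0 else 1) = (r - 1) * ℓ := by
    rw [Fintype.sum_prod_type]
    have : ∀ p : Fin r, ∑ _x : Fin ℓ, (if (p : ℕ) = 0 then 0 else 1)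
        = if p = ⟨0, hr⟩ then 0 else ℓ := by
      intro p
      by_cases hp : (p : ℕ) = 0
      · simp [hp, Fin.ext_iff]
      · simp [hp, Fin.ext_iff]
    rw [Finset.sum_congr rfl fun p _ => this p]
    have hz : (⟨0, hr⟩ : Fin r) ∈ (Finset.univ : Finset (Fin r)) := Finset.mem_univ _
    rw [← Finset.add_sum_erase _ _ hz]
    simp only [if_pos rfl, zero_add]
    rw [Finset.sum_congr rfl (fun p hp => if_neg (Finset.ne_of_mem_erase hp)),
      Finset.sum_const, Finset.card_erase_of_mem hz, Finset.card_univ,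
      Fintype.card_fin, smul_eq_mul]
    simp
  have hqdeg : q.natDegree ≤ (r - 1) * ℓ := by
    rw [hq, Matrix.det_apply']
    refine (Polynomial.natDegree_sum_le_of_forall_le _ _ fun σ _ => ?_).trans hsum.le
    refine (Polynomial.natDegree_mul_le).trans ?_
    rw [Polynomial.natDegree_intCast, zero_add]
    refine (Polynomial.natDegree_prod_le _ _).trans ?_
    calc ∑ i : Fin r × Fin ℓ, (A (σ i) i).natDegree
        ≤ ∑ i : Fin r × Fin ℓ, (if ((σ i).1 : ℕ) = 0 then 0 else 1) :=
          Finset.sum_le_sum fun i _ => hdegA (σ i) i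
      _ = ∑ x : Fin r × Fin ℓ, (if (x.1 : ℕ) = 0 then 0 else 1) :=
          Equiv.sum_comp σ (fun x : Fin r × Fin ℓ => if (x.1 : ℕ) = 0 then 0 else 1)
  -- q is nonzero: its value at 0 is det M ≠ 0
  have hMdet : M.det ≠ 0 := by
    have := (Matrix.isUnit_iff_isUnit_det M).mp (hH ι hι)
    exact IsUnit.ne_zero this
  have hq0 : q ≠ 0 := by
    intro h
    apply hMdet
    have : Polynomial.eval 0 q = M.det := by
      rw [hq]
      have : A.map (Polynomial.evalRingHom (0 : L)) = M := by
        ext x y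
        simp [hA, Matrix.map_apply, Matrix.add_apply, Matrix.smul_apply]
      calc Polynomial.eval 0 A.det = (Polynomial.evalRingHom (0:L)) A.det := rfl
        _ = (A.map (Polynomial.evalRingHom (0:L))).det := RingHom.map_det _ _
        _ = M.det := by rw [this]
    rw [← this, h, Polynomial.eval_zero]
  -- aeval ρ q ≠ 0
  have haeval : Polynomial.aeval ρ q ≠ 0 := by
    intro h
    have hdvd := minpoly.dvd L ρ h
    have := Polynomial.natDegree_le_of_dvd hdvd hq0
    omega
  rw [Matrix.isUnit_iff_isUnit_det, ← heval]
  exact haeval.isUnit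
end

section
/- Let B be a field, let r, ℓ, n be positive integers with r ≤ n, and let H, E : Matrix (Fin r × Fin ℓ) (Fin n × Fin ℓ) B be matrices such that for every injective map ι : Fin r → Fin n the block column submatrix H[ι] is invertible. Then the set {ρ : B | there exists an injective ι : Fin r → Fin n such that the block column submatrix (H + ρ • E)[ι] is not invertible} is finite and has cardinality at most (n choose r) · r · ℓ. -/
set_option maxRecDepth 4000

open Polynomial Matrix

section aux
variable {B : Type*} [Field B] {r ℓ n : ℕ}

noncomputable def badPoly (H E : Matrix (Fin r × Fin ℓ) (Fin n × Fin ℓ) B)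
    (ι : Fin r → Fin n) : B[X] :=
  Matrix.det ((X : B[X]) • (E.blockColSub ι).map C + (H.blockColSub ι).map C)

lemma badPoly_eval (H E : Matrix (Fin r × Fin ℓ) (Fin n × Fin ℓ) B)
    (ι : Fin r → Fin n) (ρ : B) :
    (badPoly H E ι).eval ρ = ((H + ρ • E).blockColSub ι).det := by
  have : ((X : B[X]) • (E.blockColSub ι).map C + (H.blockColSub ι).map C).map
      (Polynomial.evalRingHom ρ) = (H + ρ • E).blockColSub ι := by
    ext ⟨p, x⟩ ⟨j, y⟩
    simp only [Matrix.map_apply, Matrix.add_apply, Matrix.smul_apply, Matrix.blockColSub,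
      Matrix.submatrix_apply, coe_evalRingHom, eval_add, eval_mul, eval_smul, smul_eq_mul,
      eval_X, eval_C]
    ring
  rw [badPoly, ← this]
  exact (RingHom.map_det (evalRingHom ρ) _)

lemma badPoly_ne_zero (H E : Matrix (Fin r × Fin ℓ) (Fin n × Fin ℓ) B)
    (ι : Fin r → Fin n) (hι : Function.Injective ι)
    (hH : IsUnit (H.blockColSub ι)) : badPoly H E ι ≠ 0 := by
  intro h0
  have := badPoly_eval H E ι 0
  rw [h0] at this
  simp only [eval_zero, zero_smul, add_zero] at this
  rw [Matrix.isUnit_iff_isUnit_det, isUnit_iff_ne_zero] at hH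
  exact hH this.symm

lemma badPoly_natDegree (H E : Matrix (Fin r × Fin ℓ) (Fin n × Fin ℓ) B)
    (ι : Fin r → Fin n) : (badPoly H E ι).natDegree ≤ r * ℓ := by
  have := Polynomial.natDegree_det_X_add_C_le (E.blockColSub ι) (H.blockColSub ι)
  simpa [badPoly, Fintype.card_prod] using this
end aux

section aux2
variable {B : Type*} [Field B] {r ℓ n : ℕ}

lemma blockColSub_comp (M : Matrix (Fin r × Fin ℓ) (Fin n × Fin ℓ) B)
    (ι' : Fin r → Fin n) (e : Equiv.Perm (Fin r)) :
    M.blockColSub (ι' ∘ e) =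
      (M.blockColSub ι').submatrix id ⇑(Equiv.prodCongr e (Equiv.refl (Fin ℓ))) := by
  ext ⟨p, x⟩ ⟨j, y⟩
  rfl

lemma isUnit_blockColSub_comp (M : Matrix (Fin r × Fin ℓ) (Fin n × Fin ℓ) B)
    (ι' : Fin r → Fin n) (e : Equiv.Perm (Fin r)) :
    IsUnit (M.blockColSub (ι' ∘ e)) ↔ IsUnit (M.blockColSub ι') := by
  rw [blockColSub_comp, Matrix.isUnit_iff_isUnit_det, Matrix.isUnit_iff_isUnit_det,
    Matrix.det_permute', IsUnit.mul_iff]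
  have : IsUnit ((Equiv.Perm.sign (Equiv.prodCongr e (Equiv.refl (Fin ℓ))) : ℤ) : B) := by
    rcases Int.units_eq_one_or (Equiv.Perm.sign (Equiv.prodCongr e (Equiv.refl (Fin ℓ)))) with h | h <;>
      simp [h]
  exact ⟨fun h => h.2, fun h => ⟨this, h⟩⟩

end aux2

/-- if `H` is an MDS parity-check matrix, then the set of "bad"
perturbation scalars `ρ` — those for which some block column submatrix of
`H + ρ • E` fails to be invertible — is finite, of cardinality at most
`(n choose r)·r·ℓ`. -/
theorem bad_perturbations_finite
    (B : Type*) [Field B] (r ℓ n : ℕ) (hr : 0 < r) (hℓ : 0 < ℓ) (hn : 0 < n)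
    (hrn : r ≤ n)
    (H E : Matrix (Fin r × Fin ℓ) (Fin n × Fin ℓ) B)
    (hH : ∀ ι : Fin r → Fin n, Function.Injective ι → IsUnit (H.blockColSub ι)) :
    {ρ : B | ∃ ι : Fin r → Fin n, Function.Injective ι ∧
        ¬ IsUnit ((H + ρ • E).blockColSub ι)}.Finite ∧
    {ρ : B | ∃ ι : Fin r → Fin n, Function.Injective ι ∧
        ¬ IsUnit ((H + ρ • E).blockColSub ι)}.ncard ≤ Nat.choose n r * r * ℓ := by
  classical
  set f : Finset (Fin n) → (Fin r → Fin n) := fun s =>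
    if h : s.card = r then (fun j => ((s.orderIsoOfFin h j : Fin n))) else fun _ => ⟨0, hn⟩
    with hf
  have hfinj : ∀ s (h : s.card = r), Function.Injective (f s) := by
    intro s h a b hab
    simp only [hf, dif_pos h] at hab
    exact (s.orderIsoOfFin h).injective (Subtype.val_injective hab)
  set T : Finset B := (Finset.univ.powersetCard r (α := Fin n)).biUnion
      (fun s => (badPoly H E (f s)).roots.toFinset) with hT
  have key : {ρ : B | ∃ ι : Fin r → Fin n, Function.Injective ι ∧
      ¬ IsUnit ((H + ρ • E).blockColSub ι)} ⊆ ↑T := by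
    rintro ρ ⟨ι, hι, hbad⟩
    set s : Finset (Fin n) := Finset.univ.image ι with hsdef
    have hs : s.card = r := by
      rw [hsdef, Finset.card_image_of_injective _ hι, Finset.card_univ, Fintype.card_fin]
    have hmem : ∀ i, ι i ∈ s := fun i => Finset.mem_image_of_mem ι (Finset.mem_univ i)
    have hσinj : Function.Injective
        (fun i => (s.orderIsoOfFin hs).symm ⟨ι i, hmem i⟩) := by
      intro a b hab
      apply hι
      exact congrArg Subtype.val ((s.orderIsoOfFin hs).symm.injective hab)
    let e : Equiv.Perm (Fin r) :=
      Equiv.ofBijective _ ((Finite.injective_iff_bijective).mp hσinj)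
    have hcomp : ι = (f s) ∘ e := by
      funext i
      simp only [hf, dif_pos hs, Function.comp_apply]
      show ι i = ((s.orderIsoOfFin hs) ((s.orderIsoOfFin hs).symm ⟨ι i, hmem i⟩) : Fin n)
      rw [OrderIso.apply_symm_apply]
    have hbad' : ¬ IsUnit ((H + ρ • E).blockColSub (f s)) := by
      rw [hcomp, isUnit_blockColSub_comp] at hbad; exact hbad
    have hne : badPoly H E (f s) ≠ 0 :=
      badPoly_ne_zero H E _ (hfinj s hs) (hH _ (hfinj s hs))
    have heval : (badPoly H E (f s)).eval ρ = 0 := by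
      rw [badPoly_eval]
      rw [Matrix.isUnit_iff_isUnit_det, isUnit_iff_ne_zero, not_not] at hbad'
      exact hbad'
    refine Finset.mem_coe.2 (Finset.mem_biUnion.2 ⟨s, ?_, ?_⟩)
    · exact Finset.mem_powersetCard.2 ⟨Finset.subset_univ s, hs⟩
    · rw [Multiset.mem_toFinset, Polynomial.mem_roots hne]
      exact heval
  have hTcard : T.card ≤ Nat.choose n r * (r * ℓ) := by
    refine le_trans Finset.card_biUnion_le ?_
    calc ∑ s ∈ Finset.univ.powersetCard r (α := Fin n),
          (badPoly H E (f s)).roots.toFinset.card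
        ≤ ∑ _s ∈ Finset.univ.powersetCard r (α := Fin n), (r * ℓ) := by
          refine Finset.sum_le_sum ?_
          intro s _
          exact (Multiset.toFinset_card_le _).trans
            ((Polynomial.card_roots' _).trans (badPoly_natDegree H E (f s)))
      _ = (Finset.univ.powersetCard r (α := Fin n)).card * (r * ℓ) := by
          rw [Finset.sum_const, smul_eq_mul]
      _ = Nat.choose n r * (r * ℓ) := by
          rw [Finset.card_powersetCard, Finset.card_univ, Fintype.card_fin]
  constructor
  · exact Set.Finite.subset T.finite_toSet key
  · calc {ρ : B | ∃ ι : Fin r → Fin n, Function.Injective ι ∧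
          ¬ IsUnit ((H + ρ • E).blockColSub ι)}.ncard
        ≤ (↑T : Set B).ncard := Set.ncard_le_ncard key T.finite_toSet
      _ = T.card := Set.ncard_coe_finset T
      _ ≤ Nat.choose n r * (r * ℓ) := hTcard
      _ = Nat.choose n r * r * ℓ := by ring
end

section
/- Let B be a finite field, let r, ℓ, n be positive integers with r ≤ n, and let H, E : Matrix (Fin r × Fin ℓ) (Fin n × Fin ℓ) B be matrices such that for every injective map ι : Fin r → Fin n the block column submatrix H[ι] is invertible. If the cardinality of B satisfies |B| > (n choose r) · r · ℓ + 1, then there exists a nonzero ρ ∈ B such that for every injective ι : Fin r → Fin n the block column submatrix (H + ρ • E)[ι] is invertible; i.e., H + ρ • E is an MDS parity-check matrix. -/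
open Polynomial Matrix in
/-- over a finite field of size greater than `(n choose r)·r·ℓ + 1`,
some nonzero perturbation scalar `ρ` makes `H + ρ • E` an MDS parity-check
matrix, provided `H` is one. -/
theorem exists_good_perturbation
    (B : Type*) [Field B] [Fintype B] (r ℓ n : ℕ)
    (hr : 0 < r) (hℓ : 0 < ℓ) (hn : 0 < n) (hrn : r ≤ n)
    (H E : Matrix (Fin r × Fin ℓ) (Fin n × Fin ℓ) B)
    (hH : ∀ ι : Fin r → Fin n, Function.Injective ι → IsUnit (H.blockColSub ι))
    (hcard : Fintype.card B > Nat.choose n r * r * ℓ + 1) :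
    ∃ ρ : B, ρ ≠ 0 ∧ ∀ ι : Fin r → Fin n, Function.Injective ι →
      IsUnit ((H + ρ • E).blockColSub ι) := by
  classical
  -- the polynomial associated to a block column selection
  set P : (Fin r → Fin n) → Polynomial B := fun ι =>
    Matrix.det ((X : B[X]) • (E.blockColSub ι).map C + (H.blockColSub ι).map C) with hP
  have heval : ∀ (ι : Fin r → Fin n) (ρ : B),
      (P ι).eval ρ = Matrix.det ((H + ρ • E).blockColSub ι) := by
    intro ι ρ
    have := (Polynomial.evalRingHom ρ).map_det
      ((X : B[X]) • (E.blockColSub ι).map C + (H.blockColSub ι).map C)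
    rw [hP]; dsimp only
    rw [show ((P ι).eval ρ) = (Polynomial.evalRingHom ρ)
        (Matrix.det ((X : B[X]) • (E.blockColSub ι).map C + (H.blockColSub ι).map C)) from rfl,
      this]
    congr 1
    ext ⟨p, x⟩ ⟨j, y⟩
    simp only [RingHom.mapMatrix_apply, Matrix.map_apply, Matrix.add_apply, Matrix.smul_apply,
      Matrix.blockColSub, Matrix.submatrix_apply, coe_evalRingHom, eval_add, eval_mul, eval_X,
      eval_C, smul_eq_mul, Polynomial.eval_smul, Pi.smul_apply]
    exact add_comm _ _
  have hPne : ∀ ι : Fin r → Fin n, Function.Injective ι → P ι ≠ 0 := by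
    intro ι hι h0
    have := heval ι 0
    rw [h0] at this
    have hdet := (Matrix.isUnit_iff_isUnit_det _).mp (hH ι hι)
    simp only [eval_zero, zero_smul, add_zero] at this
    exact (isUnit_iff_ne_zero.mp hdet) this.symm
  have hdeg : ∀ ι : Fin r → Fin n, (P ι).natDegree ≤ r * ℓ := by
    intro ι
    have := Polynomial.natDegree_det_X_add_C_le (E.blockColSub ι) (H.blockColSub ι)
    simpa using this
  -- canonical (monotone) selection for each r-subset
  set f : Finset (Fin n) → Fin r → Fin n := fun S j =>
    if h : S.card = r then (S.orderIsoOfFin h j : Fin n) else ⟨0, hn⟩ with hf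
  -- the bad set
  set bad : Finset B :=
    insert 0 ((Finset.univ.powersetCard r : Finset (Finset (Fin n))).biUnion
      fun S => (P (f S)).roots.toFinset) with hbad
  have hbadcard : bad.card < Fintype.card B := by
    calc bad.card ≤ _ + 1 := by
          rw [hbad]
          refine (Finset.card_insert_le _ _).trans ?_
          gcongr
          refine (Finset.card_biUnion_le).trans ?_
          calc ∑ S ∈ Finset.univ.powersetCard r, ((P (f S)).roots.toFinset).card
              ≤ ∑ _S ∈ Finset.univ.powersetCard r, r * ℓ := by
                refine Finset.sum_le_sum fun S _ => ?_
                exact (Multiset.toFinset_card_le _).trans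
                  ((Polynomial.card_roots' _).trans (hdeg _))
            _ = Nat.choose n r * r * ℓ := by
                rw [Finset.sum_const, Finset.card_powersetCard, Finset.card_univ,
                  Fintype.card_fin, smul_eq_mul, mul_assoc]
      _ < Fintype.card B := hcard
  have hne : bad ≠ Finset.univ := fun h => by
    rw [h, Finset.card_univ] at hbadcard; exact lt_irrefl _ hbadcard
  obtain ⟨ρ, hρ⟩ : ∃ x, x ∉ bad := by
    by_contra hall
    push_neg at hall
    exact hne (Finset.eq_univ_iff_forall.mpr hall)
  refine ⟨ρ, fun h => hρ (by simp [hbad, h]), fun ι hι => ?_⟩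
  -- factor ι through the monotone selection of its image
  set S : Finset (Fin n) := Finset.univ.image ι with hS
  have hScard : S.card = r := by
    rw [hS, Finset.card_image_of_injective _ hι, Finset.card_univ, Fintype.card_fin]
  have hmem : ∀ j, ι j ∈ S := fun j => Finset.mem_image_of_mem ι (Finset.mem_univ j)
  set σ : Fin r → Fin r := fun j => (S.orderIsoOfFin hScard).symm ⟨ι j, hmem j⟩ with hσ
  have hfσ : ∀ j, f S (σ j) = ι j := by
    intro j
    rw [hf]
    simp only [hScard, dif_pos, hσ, Equiv.apply_symm_apply,
      OrderIso.apply_symm_apply]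
  have hσinj : Function.Injective σ := by
    intro a b hab
    apply hι
    rw [← hfσ a, ← hfσ b, hab]
  have hσbij : Function.Bijective σ := (Finite.injective_iff_bijective).mp hσinj
  set e : Equiv.Perm (Fin r) := Equiv.ofBijective σ hσbij with he
  -- the selected matrix for `f S` is invertible at ρ
  have hρroot : ρ ∉ (P (f S)).roots.toFinset := by
    intro hmem'
    exact hρ (by
      rw [hbad]
      refine Finset.mem_insert_of_mem (Finset.mem_biUnion.mpr ⟨S, ?_, hmem'⟩)
      simp [Finset.mem_powersetCard, hScard])
  have hfS_inj : Function.Injective (f S) := by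
    intro a b hab
    rw [hf] at hab
    simp only [hScard, dif_pos] at hab
    exact (S.orderIsoOfFin hScard).injective (Subtype.coe_injective hab)
  have hevalne : Matrix.det ((H + ρ • E).blockColSub (f S)) ≠ 0 := by
    rw [← heval]
    intro h0
    exact hρroot (Multiset.mem_toFinset.mpr
      ((Polynomial.mem_roots (hPne _ hfS_inj)).mpr h0))
  -- transfer invertibility along the block-column permutation
  have hsub : (H + ρ • E).blockColSub ι =
      ((H + ρ • E).blockColSub (f S)).submatrix id
        (Equiv.prodCongr e (Equiv.refl (Fin ℓ))) := by
    ext ⟨p, x⟩ ⟨j, y⟩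
    simp [Matrix.blockColSub, Matrix.submatrix, he, Equiv.ofBijective, hfσ j]
  rw [Matrix.isUnit_iff_isUnit_det, hsub,
    Matrix.det_permute' (Equiv.prodCongr e (Equiv.refl (Fin ℓ)))]
  refine isUnit_iff_ne_zero.mpr (mul_ne_zero ?_ hevalne)
  rcases Int.units_eq_one_or (Equiv.Perm.sign (Equiv.prodCongr e (Equiv.refl (Fin ℓ)))) with h | h <;>
    simp [h]
end

section
/- Let B be a field, let r, s be positive integers, set n := r·s, let λ : ZMod r × Fin s → B be any function, and let ρ ∈ B with ρ ≠ 0. Say that c : ZMod r × Fin s → ZMod r → B satisfies the constraints if: (Type I) for every x : ZMod r, ∑_{(u,v)} c (u,v) x = 0; and (Type II) for every natural number p with 1 ≤ p ≤ r−1 and every x : ZMod r, ∑_{(u,v)} (λ (u,v))^p · c (u,v) x + ρ · ∑_{v : Fin s} c (x, v) (x + p) = 0 (addition x + p taken in ZMod r). Fix (u*, v*) ∈ ZMod r × Fin s and define the download set D := {((u,v), u*) : (u,v) ≠ (u*,v*)} ∪ {((u*,v), x) : v ≠ v*, x ≠ u*} ⊆ (ZMod r × Fin s) × ZMod r. Then: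 (i) |D| = (n−1) + (r−1)·(s−1) ≤ 2·(n−1); and (ii) for any c, c′ both satisfying the constraints, if c b x = c′ b x for every (b, x) ∈ D, then c (u*,v*) = c′ (u*,v*). -/
/-- The parity constraints of the paper's `(2, n-k, n-1)`-exact-repairable MDS
code with `n = r·s` blocks and sub-packetization level `r`: Type I constraints
and Type II constraints (with perturbation coefficient `ρ`). -/
def SatisfiesConstraints (B : Type*) [Field B] (r s : ℕ) [NeZero r]
    (lam : ZMod r × Fin s → B) (ρ : B)
    (c : ZMod r × Fin s → ZMod r → B) : Prop :=
  (∀ x : ZMod r, ∑ uv : ZMod r × Fin s, c uv x = 0) ∧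
  (∀ p : ℕ, 1 ≤ p → p ≤ r - 1 → ∀ x : ZMod r,
    (∑ uv : ZMod r × Fin s, (lam uv) ^ p * c uv x) +
      ρ * ∑ v : Fin s, c (x, v) (x + (p : ZMod r)) = 0)

/-- The set of downloaded symbol positions for the repair of block `(us, vs)`:
the `us`-th symbol of every other block, together with the symbols `x ≠ us` of
the blocks `(us, v)` with `v ≠ vs`. -/
def downloadSet (r s : ℕ) [NeZero r] (us : ZMod r) (vs : Fin s) :
    Finset ((ZMod r × Fin s) × ZMod r) :=
  Finset.univ.filter fun q =>
    (q.2 = us ∧ q.1 ≠ (us, vs)) ∨ (q.1.1 = us ∧ q.1.2 ≠ vs ∧ q.2 ≠ us)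

/-- the download set has cardinality
`(n-1) + (r-1)(s-1) ≤ 2(n-1)` (with `n = r·s`), and any codeword satisfying
the constraints has its block `(us, vs)` determined by the downloaded
symbols. -/
theorem repair_by_transfer_twice_cut_set
    (B : Type*) [Field B] (r s : ℕ) [NeZero r] (hs : 0 < s)
    (lam : ZMod r × Fin s → B) (ρ : B) (hρ : ρ ≠ 0)
    (us : ZMod r) (vs : Fin s) :
    ((downloadSet r s us vs).card = (r * s - 1) + (r - 1) * (s - 1) ∧
      (downloadSet r s us vs).card ≤ 2 * (r * s - 1)) ∧
    (∀ c c' : ZMod r × Fin s → ZMod r → B,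
      SatisfiesConstraints B r s lam ρ c → SatisfiesConstraints B r s lam ρ c' →
      (∀ b x, (b, x) ∈ downloadSet r s us vs → c b x = c' b x) →
      c (us, vs) = c' (us, vs)) := by
  have hr : 0 < r := Nat.pos_of_ne_zero (NeZero.ne r)
  constructor
  · -- cardinality
    have hset : downloadSet r s us vs =
        ((Finset.univ.erase (us, vs)) ×ˢ ({us} : Finset (ZMod r))) ∪
        ((({us} : Finset (ZMod r)) ×ˢ (Finset.univ.erase vs)) ×ˢ
          (Finset.univ.erase us)) := by
      ext ⟨⟨u, v⟩, x⟩
      simp only [downloadSet, Finset.mem_filter, Finset.mem_univ, true_and,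
        Finset.mem_union, Finset.mem_product, Finset.mem_erase,
        Finset.mem_singleton]
      tauto
    have hdisj : Disjoint
        ((Finset.univ.erase (us, vs)) ×ˢ ({us} : Finset (ZMod r)))
        ((((({us} : Finset (ZMod r)) ×ˢ (Finset.univ.erase vs)) ×ˢ
          (Finset.univ.erase us)))) := by
      rw [Finset.disjoint_left]
      rintro ⟨⟨u, v⟩, x⟩ h1 h2
      simp only [Finset.mem_product, Finset.mem_singleton, Finset.mem_erase] at h1 h2
      exact h2.2.1 h1.2
    have hcard1 : (Finset.univ.erase (us, vs)).card = r * s - 1 := by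
      rw [Finset.card_erase_of_mem (Finset.mem_univ _)]
      simp [ZMod.card]
    have hcard : (downloadSet r s us vs).card = (r * s - 1) + (r - 1) * (s - 1) := by
      rw [hset, Finset.card_union_of_disjoint hdisj]
      simp only [Finset.card_product, Finset.card_singleton, hcard1,
        Finset.card_erase_of_mem (Finset.mem_univ _)]
      simp [ZMod.card, Nat.mul_comm]
    refine ⟨hcard, ?_⟩
    rw [hcard]
    obtain ⟨a, rfl⟩ := Nat.exists_eq_add_of_lt hr
    obtain ⟨b, rfl⟩ := Nat.exists_eq_add_of_lt hs
    have ha : 0 + a + 1 - 1 = a := by omega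
    have hb : 0 + b + 1 - 1 = b := by omega
    have h2 : (0 + a + 1) * (0 + b + 1) - 1 = a * b + a + b := by
      have : (0 + a + 1) * (0 + b + 1) = a * b + a + b + 1 := by ring
      omega
    rw [ha, hb, h2]
    omega
  · -- uniqueness
    intro c c' hc hc' hD
    -- memberships
    have hmem1 : ∀ b : ZMod r × Fin s, b ≠ (us, vs) → c b us = c' b us := by
      intro b hb
      apply hD
      simp [downloadSet, hb]
    have hmem2 : ∀ v : Fin s, v ≠ vs → ∀ x : ZMod r, x ≠ us →
        c (us, v) x = c' (us, v) x := by
      intro v hv x hx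
      apply hD
      simp [downloadSet, hv, hx]
    -- Step 1: c (us,vs) us = c' (us,vs) us from Type I at us
    have key1 : c (us, vs) us = c' (us, vs) us := by
      have h1 := hc.1 us
      have h2 := hc'.1 us
      rw [← Finset.add_sum_erase _ _ (Finset.mem_univ (us, vs))] at h1 h2
      have hsum : ∑ b ∈ Finset.univ.erase (us, vs), c b us =
          ∑ b ∈ Finset.univ.erase (us, vs), c' b us := by
        refine Finset.sum_congr rfl fun b hb => ?_
        exact hmem1 b (Finset.ne_of_mem_erase hb)
      linear_combination h1 - h2 - hsum
    have hall : ∀ b : ZMod r × Fin s, c b us = c' b us := by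
      intro b
      by_cases hb : b = (us, vs)
      · rw [hb]; exact key1
      · exact hmem1 b hb
    -- Step 2: other symbols via Type II at x = us
    funext x
    by_cases hx : x = us
    · rw [hx]; exact key1
    · set p : ℕ := (x - us).val with hp
      have hp1 : 1 ≤ p := by
        have : x - us ≠ 0 := sub_ne_zero.mpr hx
        have := (ZMod.val_eq_zero (x - us)).not.mpr this
        omega
      have hp2 : p ≤ r - 1 := by
        have := ZMod.val_lt (x - us)
        omega
      have hpx : us + (p : ZMod r) = x := by
        rw [hp, ZMod.natCast_val, ZMod.cast_id]
        ring
      have h1 := hc.2 p hp1 hp2 us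
      have h2 := hc'.2 p hp1 hp2 us
      rw [hpx] at h1 h2
      have hsum1 : ∑ uv : ZMod r × Fin s, lam uv ^ p * c uv us =
          ∑ uv : ZMod r × Fin s, lam uv ^ p * c' uv us := by
        refine Finset.sum_congr rfl fun b _ => by rw [hall b]
      rw [hsum1] at h1
      rw [← Finset.add_sum_erase _ _ (Finset.mem_univ vs)] at h1 h2
      have hsum2 : ∑ v ∈ Finset.univ.erase vs, c (us, v) x =
          ∑ v ∈ Finset.univ.erase vs, c' (us, v) x := by
        refine Finset.sum_congr rfl fun v hv => ?_
        exact hmem2 v (Finset.ne_of_mem_erase hv) x hx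
      have : ρ * (c (us, vs) x - c' (us, vs) x) = 0 := by
        linear_combination h1 - h2 - ρ * hsum2
      exact sub_eq_zero.mp ((mul_eq_zero.mp this).resolve_left hρ)
end

section
/- Let B be a field, let r, s, t be positive integers, set n := r·s, let λ : ZMod r × Fin s → B be any function, and let ρ ∈ B with ρ ≠ 0. Define a : Fin s → Fin t by a v := v mod t (0-based indices). Say that c : ZMod r × Fin s → (Fin t → ZMod r) → B satisfies the constraints if: (Type I) for every x : Fin t → ZMod r, ∑_{(u,v)} c (u,v) x = 0; and (Type II) for every natural number p with 1 ≤ p ≤ r−1 and every x : Fin t → ZMod r, ∑_{(u,v)} (λ (u,v))^p · c (u,v) x + ρ · ∑_{v : Fin s} c (x (a v), v) (Function.update x (a v) (x (a v) + p)) = 0. Fix (u*, v*) ∈ ZMod r × Fin s, set a* := a v*, and define D := {((u,v), x) : x a* = u* and (u,v) ≠ (u*,v*)} ∪ {((u*,v), x) : v ≠ v*, a v = a*, and x a* ≠ u*}. Then: (i) |D| ≤ (n−1)·r^(t−1) + (r−1)·r^(t−1)·(s / t), where s / t is integer (floor) division; and (ii) for any c, c′ both satisfying the constraints, if c b x = c′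 b x for every (b, x) ∈ D, then c (u*,v*) = c′ (u*,v*). -/
lemma eq_of_mod_div_eq' {t a b : ℕ} (h1 : a % t = b % t) (h2 : a / t = b / t) : a = b := by
  calc a = t * (a / t) + a % t := (Nat.div_add_mod a t).symm
    _ = t * (b / t) + b % t := by rw [h1, h2]
    _ = b := Nat.div_add_mod b t

def aIdx (s t : ℕ) (ht : 0 < t) (v : Fin s) : Fin t :=
  ⟨v.1 % t, Nat.mod_lt _ ht⟩

lemma count_fixed (r t : ℕ) [NeZero r] (i : Fin t) (u : ZMod r) :
    (Finset.univ.filter fun x : Fin t → ZMod r => x i = u).card = r ^ (t - 1) := by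
  rw [← Fintype.card_subtype]
  have e : {x : Fin t → ZMod r // x i = u} ≃ ({j : Fin t // j ≠ i} → ZMod r) :=
    { toFun := fun x j => x.1 j.1
      invFun := fun f => ⟨fun j => if h : j = i then u else f ⟨j, h⟩, by simp⟩
      left_inv := by
        intro x; ext j
        by_cases h : j = i
        · subst h; simp [x.2]
        · simp [h]
      right_inv := by intro f; funext j; simp [j.2] }
  rw [Fintype.card_congr e, Fintype.card_fun]
  congr 1
  · exact ZMod.card r
  · have : Fintype.card {j : Fin t // j ≠ i} = t - 1 := by
      simp [Fintype.card_subtype_compl]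
    rw [this]

lemma count_unfixed (r t : ℕ) [NeZero r] (ht : 0 < t) (i : Fin t) (u : ZMod r) :
    (Finset.univ.filter fun x : Fin t → ZMod r => x i ≠ u).card = (r - 1) * r ^ (t - 1) := by
  have key := Finset.card_filter_add_card_filter_not
    (s := (Finset.univ : Finset (Fin t → ZMod r))) (fun x : Fin t → ZMod r => x i = u)
  rw [count_fixed r t i u] at key
  have huniv : (Finset.univ : Finset (Fin t → ZMod r)).card = r ^ t := by
    rw [Finset.card_univ, Fintype.card_fun, ZMod.card, Fintype.card_fin]
  rw [huniv] at key
  have hrt : r ^ t = r * r ^ (t - 1) := by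
    conv_lhs => rw [show t = (t - 1) + 1 from (Nat.succ_pred_eq_of_pos ht).symm]
    rw [pow_succ']
  have hmul : (r - 1) * r ^ (t - 1) = r * r ^ (t - 1) - 1 * r ^ (t - 1) := Nat.sub_mul r 1 _
  rw [one_mul] at hmul
  have key2 : (Finset.univ.filter fun x : Fin t → ZMod r => ¬ x i = u).card
      = r ^ t - r ^ (t - 1) := Nat.eq_sub_of_add_eq' key
  simp only [ne_eq]
  rw [key2, hmul, ← hrt]

lemma count_class (s t : ℕ) (ht : 0 < t) (vs : Fin s) :
    (Finset.univ.filter fun v : Fin s => v ≠ vs ∧ aIdx s t ht v = aIdx s t ht vs).card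
      ≤ s / t := by
  have hdlt : ∀ {a b : ℕ}, a % t = b % t → a < b → a / t < b / t := by
    intro a b h hab
    by_contra hcon
    push_neg at hcon
    have : b ≤ a := by
      calc b = t * (b / t) + b % t := (Nat.div_add_mod b t).symm
        _ ≤ t * (a / t) + a % t := Nat.add_le_add (Nat.mul_le_mul_left t hcon) (le_of_eq h.symm)
        _ = a := Nat.div_add_mod a t
    exact absurd hab (not_lt.2 this)
  have hcard : (Finset.range (s / t)).card = s / t := Finset.card_range _
  rw [← hcard]
  apply Finset.card_le_card_of_injOn (fun v => if v.1 < vs.1 then v.1 / t else v.1 / t - 1)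
  · intro v hv
    simp only [Finset.mem_coe, Finset.mem_filter, Finset.mem_univ, true_and] at hv
    have hmod : v.1 % t = vs.1 % t := by simpa [aIdx] using congrArg Fin.val hv.2
    have hne : v.1 ≠ vs.1 := fun h => hv.1 (Fin.ext h)
    simp only [Finset.mem_coe, Finset.mem_range]
    by_cases h : v.1 < vs.1
    · rw [if_pos h]
      have h1 : v.1 / t < vs.1 / t := hdlt hmod h
      have h2 : vs.1 / t ≤ s / t := Nat.div_le_div_right (le_of_lt vs.2)
      exact lt_of_lt_of_le h1 h2
    · rw [if_neg h]
      have h' : vs.1 < v.1 := lt_of_le_of_ne (not_lt.1 h) (Ne.symm hne)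
      have h1 : vs.1 / t < v.1 / t := hdlt hmod.symm h'
      have h2 : v.1 / t ≤ s / t := Nat.div_le_div_right (le_of_lt v.2)
      have hp : 0 < v.1 / t := Nat.lt_of_le_of_lt (Nat.zero_le _) h1
      exact lt_of_lt_of_le (Nat.sub_lt hp Nat.one_pos) h2
  · intro v1 h1 v2 h2 hf
    simp only [Finset.mem_coe, Finset.mem_filter, Finset.mem_univ, true_and] at h1 h2
    have hm1 : v1.1 % t = vs.1 % t := by simpa [aIdx] using congrArg Fin.val h1.2
    have hm2 : v2.1 % t = vs.1 % t := by simpa [aIdx] using congrArg Fin.val h2.2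
    have hne1 : v1.1 ≠ vs.1 := fun h => h1.1 (Fin.ext h)
    have hne2 : v2.1 ≠ vs.1 := fun h => h2.1 (Fin.ext h)
    simp only at hf
    have key : v1.1 / t = v2.1 / t := by
      by_cases c1 : v1.1 < vs.1 <;> by_cases c2 : v2.1 < vs.1
      · rw [if_pos c1, if_pos c2] at hf; exact hf
      · rw [if_pos c1, if_neg c2] at hf
        have d1 : v1.1 / t < vs.1 / t := hdlt hm1 c1
        have d2 : vs.1 / t < v2.1 / t :=
          hdlt hm2.symm (lt_of_le_of_ne (not_lt.1 c2) (Ne.symm hne2))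
        have : vs.1 / t ≤ v2.1 / t - 1 := Nat.le_sub_one_of_lt d2
        rw [← hf] at this
        exact absurd d1 (not_lt.2 this)
      · rw [if_neg c1, if_pos c2] at hf
        have d1 : vs.1 / t < v1.1 / t :=
          hdlt hm1.symm (lt_of_le_of_ne (not_lt.1 c1) (Ne.symm hne1))
        have d2 : v2.1 / t < vs.1 / t := hdlt hm2 c2
        have : vs.1 / t ≤ v1.1 / t - 1 := Nat.le_sub_one_of_lt d1
        rw [hf] at this
        exact absurd d2 (not_lt.2 this)
      · rw [if_neg c1, if_neg c2] at hf
        have d1 : vs.1 / t < v1.1 / t :=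
          hdlt hm1.symm (lt_of_le_of_ne (not_lt.1 c1) (Ne.symm hne1))
        have d2 : vs.1 / t < v2.1 / t :=
          hdlt hm2.symm (lt_of_le_of_ne (not_lt.1 c2) (Ne.symm hne2))
        have e1 : 1 ≤ v1.1 / t := Nat.lt_of_le_of_lt (Nat.zero_le _) d1
        have e2 : 1 ≤ v2.1 / t := Nat.lt_of_le_of_lt (Nat.zero_le _) d2
        have := congrArg (· + 1) hf
        simpa [Nat.sub_add_cancel e1, Nat.sub_add_cancel e2] using this
    exact Fin.ext (eq_of_mod_div_eq' (hm1.trans hm2.symm) key)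

def SatisfiesConstraintsT (B : Type*) [Field B] (r s t : ℕ) [NeZero r]
    (ht : 0 < t) (lam : ZMod r × Fin s → B) (ρ : B)
    (c : ZMod r × Fin s → (Fin t → ZMod r) → B) : Prop :=
  (∀ x : Fin t → ZMod r, ∑ uv : ZMod r × Fin s, c uv x = 0) ∧
  (∀ p : ℕ, 1 ≤ p → p ≤ r - 1 → ∀ x : Fin t → ZMod r,
    (∑ uv : ZMod r × Fin s, (lam uv) ^ p * c uv x) +
      ρ * ∑ v : Fin s,
        c (x (aIdx s t ht v), v)
          (Function.update x (aIdx s t ht v) (x (aIdx s t ht v) + (p : ZMod r)))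
      = 0)

def downloadSetT (r s t : ℕ) [NeZero r] (ht : 0 < t)
    (us : ZMod r) (vs : Fin s) :
    Finset ((ZMod r × Fin s) × (Fin t → ZMod r)) :=
  Finset.univ.filter fun q =>
    (q.2 (aIdx s t ht vs) = us ∧ q.1 ≠ (us, vs)) ∨
    (q.1.1 = us ∧ q.1.2 ≠ vs ∧ aIdx s t ht q.1.2 = aIdx s t ht vs ∧
      q.2 (aIdx s t ht vs) ≠ us)

/-- the download set has cardinality at most
`(n-1)·r^(t-1) + (r-1)·r^(t-1)·⌊s/t⌋` (with `n = r·s`), and any codeword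
satisfying the constraints has its block `(us, vs)` determined by the
downloaded symbols. -/
theorem repair_by_transfer_general
    (B : Type*) [Field B] (r s t : ℕ) [NeZero r] (hs : 0 < s) (ht : 0 < t)
    (lam : ZMod r × Fin s → B) (ρ : B) (hρ : ρ ≠ 0)
    (us : ZMod r) (vs : Fin s) :
    (downloadSetT r s t ht us vs).card ≤
      (r * s - 1) * r ^ (t - 1) + (r - 1) * r ^ (t - 1) * (s / t) ∧
    (∀ c c' : ZMod r × Fin s → (Fin t → ZMod r) → B,
      SatisfiesConstraintsT B r s t ht lam ρ c →
      SatisfiesConstraintsT B r s t ht lam ρ c' →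
      (∀ b x, (b, x) ∈ downloadSetT r s t ht us vs → c b x = c' b x) →
      c (us, vs) = c' (us, vs)) := by
  classical
  set a' := aIdx s t ht vs with ha'
  constructor
  · -- cardinality bound
    have hsplit : downloadSetT r s t ht us vs =
        (Finset.univ.filter fun q : (ZMod r × Fin s) × (Fin t → ZMod r) =>
          q.2 a' = us ∧ q.1 ≠ (us, vs)) ∪
        (Finset.univ.filter fun q : (ZMod r × Fin s) × (Fin t → ZMod r) =>
          q.1.1 = us ∧ q.1.2 ≠ vs ∧ aIdx s t ht q.1.2 = a' ∧ q.2 a' ≠ us) := by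
      rw [downloadSetT, Finset.filter_or]
    rw [hsplit]
    refine le_trans (Finset.card_union_le _ _) ?_
    have hA : (Finset.univ.filter fun q : (ZMod r × Fin s) × (Fin t → ZMod r) =>
          q.2 a' = us ∧ q.1 ≠ (us, vs))
        = (Finset.univ.filter fun b : ZMod r × Fin s => b ≠ (us, vs)) ×ˢ
          (Finset.univ.filter fun x : Fin t → ZMod r => x a' = us) := by
      ext q
      simp only [Finset.mem_filter, Finset.mem_univ, true_and, Finset.mem_product]
      tauto
    have hB : (Finset.univ.filter fun q : (ZMod r × Fin s) × (Fin t → ZMod r) =>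
          q.1.1 = us ∧ q.1.2 ≠ vs ∧ aIdx s t ht q.1.2 = a' ∧ q.2 a' ≠ us)
        = (Finset.univ.filter fun b : ZMod r × Fin s =>
            b.1 = us ∧ b.2 ≠ vs ∧ aIdx s t ht b.2 = a') ×ˢ
          (Finset.univ.filter fun x : Fin t → ZMod r => x a' ≠ us) := by
      ext q
      simp only [Finset.mem_filter, Finset.mem_univ, true_and, Finset.mem_product]
      tauto
    have hBb : (Finset.univ.filter fun b : ZMod r × Fin s =>
          b.1 = us ∧ b.2 ≠ vs ∧ aIdx s t ht b.2 = a')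
        = ({us} : Finset (ZMod r)) ×ˢ
          (Finset.univ.filter fun v : Fin s => v ≠ vs ∧ aIdx s t ht v = a') := by
      ext b
      simp only [Finset.mem_filter, Finset.mem_univ, true_and, Finset.mem_product,
        Finset.mem_singleton]
      try tauto
    rw [hA, hB, hBb, Finset.card_product, Finset.card_product, Finset.card_product]
    have hne : (Finset.univ.filter fun b : ZMod r × Fin s => b ≠ (us, vs)).card
        = r * s - 1 := by
      rw [Finset.filter_ne', Finset.card_erase_of_mem (Finset.mem_univ _), Finset.card_univ]
      simp [ZMod.card]
    rw [hne, count_fixed, Finset.card_singleton, count_unfixed r t ht, one_mul]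
    refine Nat.add_le_add_left ?_ _
    calc (Finset.univ.filter fun v : Fin s => v ≠ vs ∧ aIdx s t ht v = a').card
          * ((r - 1) * r ^ (t - 1))
        ≤ (s / t) * ((r - 1) * r ^ (t - 1)) :=
          Nat.mul_le_mul_right _ (count_class s t ht vs)
      _ = (r - 1) * r ^ (t - 1) * (s / t) := mul_comm _ _
  · -- determination
    intro c c' hc hc' hD
    have mem1 : ∀ (b : ZMod r × Fin s) (x : Fin t → ZMod r),
        x a' = us → b ≠ (us, vs) → c b x = c' b x := by
      intro b x h1 h2
      exact hD b x (Finset.mem_filter.mpr ⟨Finset.mem_univ _, Or.inl ⟨h1, h2⟩⟩)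
    have mem2 : ∀ (v : Fin s) (x : Fin t → ZMod r),
        v ≠ vs → aIdx s t ht v = a' → x a' ≠ us → c (us, v) x = c' (us, v) x := by
      intro v x h1 h2 h3
      exact hD (us, v) x (Finset.mem_filter.mpr ⟨Finset.mem_univ _, Or.inr ⟨rfl, h1, h2, h3⟩⟩)
    have step1 : ∀ x : Fin t → ZMod r, x a' = us → c (us, vs) x = c' (us, vs) x := by
      intro x hx
      have hsum : ∑ uv : ZMod r × Fin s, (c uv x - c' uv x) = 0 := by
        rw [Finset.sum_sub_distrib, hc.1 x, hc'.1 x, sub_zero]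
      have hsingle : ∑ uv : ZMod r × Fin s, (c uv x - c' uv x)
          = c (us, vs) x - c' (us, vs) x := by
        refine Finset.sum_eq_single_of_mem (us, vs) (Finset.mem_univ _) ?_
        intro b _ hb
        rw [mem1 b x hx hb, sub_self]
      rw [hsingle] at hsum
      exact sub_eq_zero.mp hsum
    funext y
    by_cases hy : y a' = us
    · exact step1 y hy
    · set p := ((y a' - us : ZMod r)).val with hpdef
      have hsub : (y a' - us : ZMod r) ≠ 0 := sub_ne_zero.mpr hy
      have hp0 : ((p : ℕ) : ZMod r) = y a' - us := by
        rw [hpdef, ZMod.natCast_val, ZMod.cast_id]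
      have hpne : ((p : ℕ) : ZMod r) ≠ 0 := by rw [hp0]; exact hsub
      have hp1 : 1 ≤ p := Nat.pos_of_ne_zero ((ZMod.val_ne_zero _).mpr hsub)
      have hp2 : p ≤ r - 1 := by
        have := ZMod.val_lt (y a' - us : ZMod r)
        omega
      set x := Function.update y a' us with hxdef
      have hxa : x a' = us := Function.update_self _ _ _
      have h2c := hc.2 p hp1 hp2 x
      have h2c' := hc'.2 p hp1 hp2 x
      have hsum1 : ∑ uv : ZMod r × Fin s, lam uv ^ p * c uv x
          = ∑ uv : ZMod r × Fin s, lam uv ^ p * c' uv x := by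
        refine Finset.sum_congr rfl ?_
        intro b _
        by_cases hb : b = (us, vs)
        · rw [hb, step1 x hxa]
        · rw [mem1 b x hxa hb]
      have hS : ∑ v : Fin s,
            c (x (aIdx s t ht v), v)
              (Function.update x (aIdx s t ht v) (x (aIdx s t ht v) + (p : ZMod r)))
          = ∑ v : Fin s,
            c' (x (aIdx s t ht v), v)
              (Function.update x (aIdx s t ht v) (x (aIdx s t ht v) + (p : ZMod r))) := by
        have hρS : ρ * ∑ v : Fin s,
              c (x (aIdx s t ht v), v)
                (Function.update x (aIdx s t ht v) (x (aIdx s t ht v) + (p : ZMod r)))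
            = ρ * ∑ v : Fin s,
              c' (x (aIdx s t ht v), v)
                (Function.update x (aIdx s t ht v) (x (aIdx s t ht v) + (p : ZMod r))) := by
          have := h2c.trans h2c'.symm
          rw [hsum1] at this
          exact add_left_cancel this
        exact mul_left_cancel₀ hρ hρS
      -- terms for v ≠ vs agree
      have hterms : ∀ v : Fin s, v ≠ vs →
          c (x (aIdx s t ht v), v)
            (Function.update x (aIdx s t ht v) (x (aIdx s t ht v) + (p : ZMod r)))
          = c' (x (aIdx s t ht v), v)
            (Function.update x (aIdx s t ht v) (x (aIdx s t ht v) + (p : ZMod r))) := by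
        intro v hv
        by_cases hav : aIdx s t ht v = a'
        · have hxav : x (aIdx s t ht v) = us := by rw [hav, hxa]
          rw [hxav]
          refine mem2 v _ hv hav ?_
          rw [hav, Function.update_self]
          intro hcon
          exact hpne (by rwa [add_eq_left] at hcon)
        · refine mem1 _ _ ?_ ?_
          · rw [Function.update_of_ne (fun h => hav h.symm)]
            exact hxa
          · intro hcon
            exact hv (congrArg Prod.snd hcon)
      -- conclude at vs
      have hdiff : ∑ v : Fin s,
          (c (x (aIdx s t ht v), v)
              (Function.update x (aIdx s t ht v) (x (aIdx s t ht v) + (p : ZMod r)))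
            - c' (x (aIdx s t ht v), v)
              (Function.update x (aIdx s t ht v) (x (aIdx s t ht v) + (p : ZMod r)))) = 0 := by
        rw [Finset.sum_sub_distrib, hS, sub_self]
      have hsingle : ∑ v : Fin s,
          (c (x (aIdx s t ht v), v)
              (Function.update x (aIdx s t ht v) (x (aIdx s t ht v) + (p : ZMod r)))
            - c' (x (aIdx s t ht v), v)
              (Function.update x (aIdx s t ht v) (x (aIdx s t ht v) + (p : ZMod r))))
          = c (x a', vs) (Function.update x a' (x a' + (p : ZMod r)))
            - c' (x a', vs) (Function.update x a' (x a' + (p : ZMod r))) := by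
        refine Finset.sum_eq_single_of_mem vs (Finset.mem_univ _) ?_
        intro v _ hv
        rw [hterms v hv, sub_self]
      rw [hsingle] at hdiff
      have hupd : Function.update x a' (us + (p : ZMod r)) = y := by
        have h5 : us + ((p : ZMod r)) = y a' := by rw [hp0]; ring
        rw [h5, hxdef, Function.update_idem, Function.update_eq_self]
      rw [hxa, hupd] at hdiff
      exact sub_eq_zero.mp hdiff
end

section
/- Let L be a field, let m be a positive integer, let A, E : Matrix (Fin m) (Fin m) L, and let R : Finset (Fin m) be such that E i j = 0 for every i ∉ R and every j. Then the polynomial f(X) := det (A.map Polynomial.C + Polynomial.X • E.map Polynomial.C) ∈ L[X] has natDegree at most R.card, and f.eval 0 = det A. -/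
/-- if the perturbation matrix `E` is supported on the rows in
`R`, then the determinant polynomial `f(X) = det(A + X·E)` has degree at most
`|R|`, and `f(0) = det A`. -/
theorem det_perturbation_natDegree_le
    (L : Type*) [Field L] (m : ℕ) (hm : 0 < m)
    (A E : Matrix (Fin m) (Fin m) L) (R : Finset (Fin m))
    (hE : ∀ i ∉ R, ∀ j, E i j = 0) :
    (Matrix.det (A.map Polynomial.C + (Polynomial.X : Polynomial L) • E.map Polynomial.C)).natDegree
        ≤ R.card ∧
    (Matrix.det (A.map Polynomial.C + (Polynomial.X : Polynomial L) • E.map Polynomial.C)).eval 0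
        = A.det := by
  set M : Matrix (Fin m) (Fin m) (Polynomial L) :=
    A.map Polynomial.C + (Polynomial.X : Polynomial L) • E.map Polynomial.C with hM
  have hentry : ∀ i j, M i j = Polynomial.C (A i j) + Polynomial.X * Polynomial.C (E i j) := by
    intro i j
    rfl
  have hdeg : ∀ i j, (M i j).natDegree ≤ if i ∈ R then 1 else 0 := by
    intro i j
    by_cases hi : i ∈ R
    · simp only [hi, if_true, hentry]
      refine le_trans (Polynomial.natDegree_add_le _ _) ?_
      simp only [Polynomial.natDegree_C, max_le_iff]
      refine ⟨Nat.zero_le _, le_trans (Polynomial.natDegree_mul_le) ?_⟩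
      simp [Polynomial.natDegree_X_le]
    · simp only [hi, if_false, hentry, hE i hi, Polynomial.C_0, mul_zero, add_zero,
        Polynomial.natDegree_C, le_refl]
  constructor
  · rw [Matrix.det_apply']
    refine le_trans (Polynomial.natDegree_sum_le _ _) ?_
    rw [Finset.fold_max_le]
    refine ⟨Nat.zero_le _, ?_⟩
    intro σ _
    refine le_trans (Polynomial.natDegree_mul_le) ?_
    rw [Polynomial.natDegree_intCast, zero_add]
    refine le_trans (Polynomial.natDegree_prod_le _ _) ?_
    calc ∑ i, (M (σ i) i).natDegree ≤ ∑ i, if σ i ∈ R then 1 else 0 :=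
          Finset.sum_le_sum fun i _ => hdeg (σ i) i
      _ = ∑ i, if i ∈ R then 1 else 0 := Equiv.sum_comp σ (fun i => if i ∈ R then 1 else 0)
      _ = R.card := by simp
  · have h := RingHom.map_det (Polynomial.evalRingHom (0 : L)) M
    show (Polynomial.evalRingHom (0 : L)) M.det = A.det
    rw [h]
    congr 1
    ext i j
    simp [hentry]
end
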